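/- arXiv:1411.3877 — 2 statements merged into one kernel-verified Lean document; each statement's English description precedes it below -/
import Mathlib

section
/- Let χ be a Dirichlet character mod N, M a positive integer with gcd(M,N) = 1, and k ∈ ℤ. Let ι_Hecke : ρ_χ → T_M ρ_χ be the inclusion 𝔢_γ ↦ M^{k/2−1} Σ_{m∈Δ_M} χ(m) \overline{χ}(I_{I₂}(I_m(γ))) 𝔢_{I_m(γ)} ⊗ 𝔢_{m·γ}, and π_Hecke : T_M ρ_χ → ρ_χ its adjoint projection (⟨π_Hecke(x), w⟩ = ⟨x, ι_Hecke(w)⟩). Then for every f ∈ M_k(χ) and every v ∈ V(ρ_χ): ⟨Ind(f|_{k,χ}T_M), v⟩ = ⟨π_Hecke(T_M Ind f), v⟩ = ⟨T_M Ind f, ι_Hecke(v)⟩, where (f|_{k,χ}T_M)(τ) = M^{k−1} Σ_{d|M, 0≤b<d} d^{−k} \overline{χ}(d) f((M d^{−1} τ + b)/d) is the classical Hecke operator. -/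
open scoped MatrixGroups Manifold Kronecker ComplexConjugate Classical ComplexOrder
open Matrix UpperHalfPlane Complex Filter MeasureTheory CongruenceSubgroup

noncomputable section

namespace VVMF

abbrev GL2ℤ := Matrix (Fin 2) (Fin 2) ℤ

/-- The automorphy factor `c τ + d` for `γ ∈ SL(2,ℤ)`. -/
def denomZ (γ : SL(2, ℤ)) (τ : ℍ) : ℂ :=
  ((γ 1 0 : ℤ) : ℂ) * (τ : ℂ) + ((γ 1 1 : ℤ) : ℂ)

/-- `ρ` is a (matrix) representation of `SL(2,ℤ)`. -/
def IsRep {ι : Type*} [Fintype ι] (ρ : SL(2, ℤ) → Matrix ι ι ℂ) : Prop :=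
  ρ 1 = 1 ∧ ∀ γ δ : SL(2, ℤ), ρ (γ * δ) = ρ γ * ρ δ

/-- The weight-`k` slash action `f ∣_{k,ρ} γ` on vector-valued functions. -/
def vslash {ι : Type*} [Fintype ι] (k : ℤ) (ρ : SL(2, ℤ) → Matrix ι ι ℂ)
    (γ : SL(2, ℤ)) (f : ℍ → ι → ℂ) : ℍ → ι → ℂ :=
  fun τ => (denomZ γ τ) ^ (-k) • (ρ γ⁻¹).mulVec (f (γ • τ))

/-- Vector-valued modular form of weight `k` and type `ρ`: holomorphic,
slash-invariant, with all components (equivalently, all functionals) bounded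
towards `i∞`. -/
def IsVModForm {ι : Type*} [Fintype ι] (k : ℤ) (ρ : SL(2, ℤ) → Matrix ι ι ℂ)
    (f : ℍ → ι → ℂ) : Prop :=
  (∀ i, MDifferentiable 𝓘(ℂ) 𝓘(ℂ) (fun τ : ℍ => f τ i)) ∧
  (∀ γ : SL(2, ℤ), vslash k ρ γ f = f) ∧
  (∀ i, IsBoundedAtImInfty (fun τ : ℍ => f τ i))

/-- Vector-valued cusp form. -/
def IsVCuspForm {ι : Type*} [Fintype ι] (k : ℤ) (ρ : SL(2, ℤ) → Matrix ι ι ℂ)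
    (f : ℍ → ι → ℂ) : Prop :=
  (∀ i, MDifferentiable 𝓘(ℂ) 𝓘(ℂ) (fun τ : ℍ => f τ i)) ∧
  (∀ γ : SL(2, ℤ), vslash k ρ γ f = f) ∧
  (∀ i, IsZeroAtImInfty (fun τ : ℍ => f τ i))

/-- The space `M_k(ρ)` of modular forms of weight `k` and type `ρ`. -/
def Mk {ι : Type*} [Fintype ι] (k : ℤ) (ρ : SL(2, ℤ) → Matrix ι ι ℂ) :
    Set (ℍ → ι → ℂ) := {f | IsVModForm k ρ f}

/-- The trivial one-dimensional representation `𝟙` of `SL(2,ℤ)`. -/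
def oneRep : SL(2, ℤ) → Matrix Unit Unit ℂ := fun _ => 1

/-- The scalar slash action on ℂ-valued functions. -/
def cslash (k : ℤ) (γ : SL(2, ℤ)) (f : ℍ → ℂ) : ℍ → ℂ :=
  fun τ => (denomZ γ τ) ^ (-k) * f (γ • τ)

/-- A Dirichlet character mod `N` evaluated on the lower right entry `d(γ)`. -/
def dirSL {N : ℕ} (χ : DirichletCharacter ℂ N) (γ : SL(2, ℤ)) : ℂ :=
  χ (((γ 1 1 : ℤ) : ZMod N))

/-- Classical modular form of weight `k` for `Γ₀(N)` and Dirichlet character `χ`. -/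
def IsModFormChi {N : ℕ} (k : ℤ) (χ : DirichletCharacter ℂ N) (f : ℍ → ℂ) : Prop :=
  MDifferentiable 𝓘(ℂ) 𝓘(ℂ) f ∧
  (∀ γ ∈ Gamma0 N, (fun τ => dirSL χ γ⁻¹ * cslash k γ f τ) = f) ∧
  (∀ γ : SL(2, ℤ), IsBoundedAtImInfty (cslash k γ f))

/-- Classical cusp form of weight `k` for `Γ₀(N)` and Dirichlet character `χ`. -/
def IsCuspFormChi {N : ℕ} (k : ℤ) (χ : DirichletCharacter ℂ N) (f : ℍ → ℂ) : Prop :=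
  MDifferentiable 𝓘(ℂ) 𝓘(ℂ) f ∧
  (∀ γ ∈ Gamma0 N, (fun τ => dirSL χ γ⁻¹ * cslash k γ f τ) = f) ∧
  (∀ γ : SL(2, ℤ), IsZeroAtImInfty (cslash k γ f))

/-! ### The sets `Δ_M` and vector-valued Hecke operators -/

/-- Membership in `Δ_M`: upper triangular, positive diagonal (automatic for `M > 0`),
determinant `M`, and `0 ≤ b < d`. -/
def DeltaPred (M : ℕ) (m : GL2ℤ) : Prop :=
  m 1 0 = 0 ∧ 0 < m 0 0 ∧ m 0 0 * m 1 1 = (M : ℤ) ∧ 0 ≤ m 0 1 ∧ m 0 1 < m 1 1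

/-- The set `Δ_M` of upper triangular matrices `(a b; 0 d)`, `a d = M`, `0 ≤ b < d`. -/
def Delta (M : ℕ) : Type := {m : GL2ℤ // DeltaPred M m}

instance (M : ℕ) : Finite (Delta M) := by
  have key : ∀ m : Delta M, m.1 0 0 ≤ (M : ℤ) ∧ m.1 0 1 ≤ (M : ℤ) ∧ m.1 1 1 ≤ (M : ℤ) := by
    rintro ⟨m, hc, ha, hdet, hb0, hbd⟩
    have hd : 1 ≤ m 1 1 := by nlinarith
    have ha' : 1 ≤ m 0 0 := ha
    refine ⟨?_, ?_, ?_⟩ <;> nlinarith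
  refine Finite.of_injective
    (fun m : Delta M => ((⟨(m.1 0 0).toNat, ?_⟩ : Fin (M+1)), (⟨(m.1 0 1).toNat, ?_⟩ : Fin (M+1)),
      (⟨(m.1 1 1).toNat, ?_⟩ : Fin (M+1)))) ?_
  · have := key m; omega
  · have := key m; omega
  · have := key m; omega
  · intro m m' h
    have h1 := congrArg (fun p => (p.1 : Fin (M+1)).val) h
    have h2 := congrArg (fun p => (p.2.1 : Fin (M+1)).val) h
    have h3 := congrArg (fun p => (p.2.2 : Fin (M+1)).val) h
    simp only at h1 h2 h3
    have e1 : m.1 0 0 = m'.1 0 0 := by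
      have p1 := m.2.2.1; have p2 := m'.2.2.1
      omega
    have e2 : m.1 0 1 = m'.1 0 1 := by
      have p1 := m.2.2.2.2.1; have p2 := m'.2.2.2.2.1
      omega
    have e3 : m.1 1 1 = m'.1 1 1 := by
      have p1 := m.2.2.2.2.1; have p2 := m'.2.2.2.2.1
      have q1 := m.2.2.2.2.2; have q2 := m'.2.2.2.2.2
      omega
    apply Subtype.ext
    ext i j
    fin_cases i <;> fin_cases j
    · exact e1
    · exact e2
    · show m.1 1 0 = m'.1 1 0
      rw [m.2.1, m'.2.1]
    · exact e3

instance (M : ℕ) : Fintype (Delta M) := Fintype.ofFinite _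

/-- `HeckeData M bar coc` asserts that for every `m ∈ Δ_M` and `γ ∈ SL(2,ℤ)` we have
`m γ = I_m(γ) · overline{m γ}` with `overline{m γ} = bar m γ ∈ Δ_M` and
`I_m(γ) = coc m γ ∈ SL(2,ℤ)`. -/
def HeckeData (M : ℕ) (bar : Delta M → SL(2, ℤ) → Delta M)
    (coc : Delta M → SL(2, ℤ) → SL(2, ℤ)) : Prop :=
  ∀ (m : Delta M) (γ : SL(2, ℤ)),
    ((coc m γ : SL(2, ℤ)) : GL2ℤ) * (bar m γ).1 = m.1 * (γ : GL2ℤ)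

/-- The representation `T_M ρ` on `V(ρ) ⊗ ℂ[Δ_M]` (coordinates `ι × Δ_M`):
`(T_M ρ)(γ) (v ⊗ 𝔢_m) = ρ(I_m(γ⁻¹)⁻¹) v ⊗ 𝔢_{m·γ⁻¹}`. -/
def heckeRep {ι : Type*} (M : ℕ) (ρ : SL(2, ℤ) → Matrix ι ι ℂ)
    (bar : Delta M → SL(2, ℤ) → Delta M) (coc : Delta M → SL(2, ℤ) → SL(2, ℤ)) :
    SL(2, ℤ) → Matrix (ι × Delta M) (ι × Delta M) ℂ :=
  fun γ p q => if p.2 = bar q.2 γ⁻¹ then ρ ((coc q.2 γ⁻¹)⁻¹) p.1 q.1 else 0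

/-- Möbius action of an upper triangular integer matrix `(a b; 0 d)` (with
`(aτ+b)/d ∈ ℍ`, as is the case for `m ∈ Δ_M`) on `ℍ`. -/
def utAct (m : GL2ℤ) (τ : ℍ) : ℍ :=
  if h : 0 < ((((m 0 0 : ℤ) : ℂ) * (τ : ℂ) + ((m 0 1 : ℤ) : ℂ)) / ((m 1 1 : ℤ) : ℂ)).im
  then ⟨_, h⟩ else τ

/-- The slash `(f ∣_k m)(τ) = (a/d)^{k/2} f((aτ+b)/d)` for `m = (a b; 0 d)`. -/
def mslash {ι : Type*} (k : ℤ) (m : GL2ℤ) (f : ℍ → ι → ℂ) : ℍ → ι → ℂ :=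
  fun τ => (((((m 0 0 : ℤ) : ℝ) / ((m 1 1 : ℤ) : ℝ)) ^ ((k : ℝ) / 2) : ℝ) : ℂ) • f (utAct m τ)

/-- The vector-valued Hecke operator on forms:
`T_M f = ∑_{m ∈ Δ_M} (f ∣_k m) ⊗ 𝔢_m`. -/
def heckeT {ι : Type*} (M : ℕ) (k : ℤ) (f : ℍ → ι → ℂ) : ℍ → (ι × Delta M) → ℂ :=
  fun τ p => mslash k p.2.1 f τ p.1

/-- Tensor product of vector-valued functions, `(f ⊗ g)(τ) = f(τ) ⊗ g(τ)`. -/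
def tensorF {α β : Type*} (f : ℍ → α → ℂ) (g : ℍ → β → ℂ) : ℍ → α × β → ℂ :=
  fun τ p => f τ p.1 * g τ p.2

/-! ### Right cosets and induced representations -/

/-- The set of right cosets `Γ\SL(2,ℤ)`. -/
def Cos (Γ : Subgroup SL(2, ℤ)) : Type := Quotient (QuotientGroup.rightRel Γ)

/-- The coset `Γ γ`. -/
def mkCos (Γ : Subgroup SL(2, ℤ)) (γ : SL(2, ℤ)) : Cos Γ :=
  Quotient.mk (QuotientGroup.rightRel Γ) γ

/-- Right translation of right cosets: `Γγ ↦ Γγδ`. -/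
def cosMul (Γ : Subgroup SL(2, ℤ)) (c : Cos Γ) (δ : SL(2, ℤ)) : Cos Γ :=
  Quotient.map' (· * δ) (by
    intro a b h
    rw [QuotientGroup.rightRel_apply] at h ⊢
    simpa [mul_assoc] using h) c

/-- `IsSection Γ sec` says `sec` picks a representative in each right coset of `Γ`,
with the identity coset represented by `1` (i.e. `1 ∈ B`). -/
def IsSection (Γ : Subgroup SL(2, ℤ)) (sec : Cos Γ → SL(2, ℤ)) : Prop :=
  (∀ c, mkCos Γ (sec c) = c) ∧ sec (mkCos Γ 1) = 1

/-- The cocycle `I_β(δ) ∈ Γ` of the chosen system of representatives: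
`β δ = I_β(δ) · overline{β δ}`, extended to all of `SL(2,ℤ)` by `I_β = I_{overline β}`. -/
def indCoc (Γ : Subgroup SL(2, ℤ)) (sec : Cos Γ → SL(2, ℤ)) (c : Cos Γ)
    (δ : SL(2, ℤ)) : SL(2, ℤ) :=
  sec c * δ * (sec (cosMul Γ c δ))⁻¹

/-- The induced representation `Ind_Γ χ` on `ℂ[Γ\SL(2,ℤ)]`, for a character given as
a function `χf : SL(2,ℤ) → ℂ` (evaluated only on elements of `Γ`):
`(Ind_Γ χ)(γ) 𝔢_β = χ(I_β(γ⁻¹)⁻¹) 𝔢_{β·γ⁻¹}`. -/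
def indRep (Γ : Subgroup SL(2, ℤ)) (sec : Cos Γ → SL(2, ℤ)) (χf : SL(2, ℤ) → ℂ) :
    SL(2, ℤ) → Matrix (Cos Γ) (Cos Γ) ℂ :=
  fun γ c c' => if c = cosMul Γ c' γ⁻¹ then χf ((indCoc Γ sec c' γ⁻¹)⁻¹) else 0

/-- The induced representation `Ind_Γ 𝟙` (a permutation representation). -/
def permRep (Γ : Subgroup SL(2, ℤ)) : SL(2, ℤ) → Matrix (Cos Γ) (Cos Γ) ℂ :=
  fun γ c c' => if c = cosMul Γ c' γ⁻¹ then 1 else 0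

/-- The induction map on modular forms, `Ind f = ∑_γ (f ∣_k γ) 𝔢_γ`. -/
def indForm (Γ : Subgroup SL(2, ℤ)) (sec : Cos Γ → SL(2, ℤ)) (k : ℤ) (f : ℍ → ℂ) :
    ℍ → Cos Γ → ℂ :=
  fun τ c => cslash k (sec c) f τ

/-- The pointwise pairing `⟨f, v⟩ : τ ↦ ⟨f(τ), v⟩` with respect to the scalar
product making the standard basis orthonormal. -/
def pairF {α : Type*} [Fintype α] (f : ℍ → α → ℂ) (v : α → ℂ) : ℍ → ℂ :=
  fun τ => ∑ a, f τ a * conj (v a)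

/-! ### Eisenstein series -/

/-- The matrix `T = (1 1; 0 1)`. -/
def Tmat : SL(2, ℤ) := ⟨!![1, 1; 0, 1], by norm_num [Matrix.det_fin_two_of]⟩

/-- The relation whose classes are the right cosets `Γ_∞(v) γ` of
`Γ_∞(v) = {γ ∈ Γ_∞ : ρ(γ) v = v}`. -/
def eisRel {ι : Type*} [Fintype ι] (ρ : SL(2, ℤ) → Matrix ι ι ℂ) (v : ι → ℂ)
    (a b : SL(2, ℤ)) : Prop :=
  ((b * a⁻¹ : SL(2, ℤ)) 1 0 : ℤ) = 0 ∧ (ρ (b * a⁻¹)).mulVec v = v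

/-- The index `[Γ_∞ : Γ_∞(v)]`. -/
def eisIndex {ι : Type*} [Fintype ι] (ρ : SL(2, ℤ) → Matrix ι ι ℂ) (v : ι → ℂ) : ℕ :=
  Nat.card (Quotient (Relation.EqvGen.setoid
    (fun a b : {g : SL(2, ℤ) // (g 1 0 : ℤ) = 0} => eisRel ρ v a.1 b.1)))

/-- The Eisenstein series
`E_{k,v} = [Γ_∞ : Γ_∞(v)]⁻¹ ∑_{γ ∈ Γ_∞(v)\SL(2,ℤ)} v ∣_{k,ρ} γ` (for `k > 2`). -/
def eisSeries {ι : Type*} [Fintype ι] (k : ℤ) (ρ : SL(2, ℤ) → Matrix ι ι ℂ)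
    (v : ι → ℂ) : ℍ → ι → ℂ :=
  fun τ => ((eisIndex ρ v : ℂ))⁻¹ •
    ∑' c : Quotient (Relation.EqvGen.setoid (eisRel ρ v)),
      vslash k ρ (Quotient.out c) (fun _ => v) τ

/-- The Eisenstein series defined via the Hecke trick,
`E_{k,v} = [Γ_∞ : Γ_∞(v)]⁻¹ lim_{s→0} ∑_{γ ∈ Γ_∞(v)\SL(2,ℤ)} y^s v ∣_{k,ρ} γ`. -/
def eisSeriesH {ι : Type*} [Fintype ι] (k : ℤ) (ρ : SL(2, ℤ) → Matrix ι ι ℂ)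
    (v : ι → ℂ) : ℍ → ι → ℂ :=
  fun τ => limUnder (nhdsWithin (0 : ℝ) (Set.Ioi 0)) (fun s : ℝ =>
    ((eisIndex ρ v : ℂ))⁻¹ •
      ∑' c : Quotient (Relation.EqvGen.setoid (eisRel ρ v)),
        ((((Quotient.out c • τ : ℍ).im) ^ s : ℝ) : ℂ) •
          vslash k ρ (Quotient.out c) (fun _ => v) τ)

/-- The Eisenstein space `E_k(ρ) = span{E_{k,v} : v ∈ V(ρ)}` (for `k > 2`). -/
def Ek {ι : Type*} [Fintype ι] (k : ℤ) (ρ : SL(2, ℤ) → Matrix ι ι ℂ) :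
    Submodule ℂ (ℍ → ι → ℂ) :=
  Submodule.span ℂ {f | ∃ v : ι → ℂ, f = eisSeries k ρ v}

/-- The submodule of `SL(2,ℤ)`-invariant vectors (the isotrivial component `ρ(𝟙)`). -/
def invariants {ι : Type*} [Fintype ι] (ρ : SL(2, ℤ) → Matrix ι ι ℂ) :
    Submodule ℂ (ι → ℂ) where
  carrier := {v | ∀ γ, (ρ γ).mulVec v = v}
  add_mem' := by
    intro a b ha hb γ
    rw [Matrix.mulVec_add, ha, hb]
  zero_mem' := by
    intro γ
    simp [Matrix.mulVec_zero]
  smul_mem' := by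
    intro c a ha γ
    rw [Matrix.mulVec_smul, ha]

/-- The subspace `V(ρ)(1)_T = {v : ρ(T) v = v}` of `T`-fixed vectors. -/
def fixedT {ι : Type*} [Fintype ι] (ρ : SL(2, ℤ) → Matrix ι ι ℂ) :
    Submodule ℂ (ι → ℂ) where
  carrier := {v | (ρ Tmat).mulVec v = v}
  add_mem' := by
    intro a b ha hb
    show (ρ Tmat).mulVec _ = _
    rw [Matrix.mulVec_add, ha, hb]
  zero_mem' := by
    show (ρ Tmat).mulVec _ = _
    simp [Matrix.mulVec_zero]
  smul_mem' := by
    intro c a ha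
    show (ρ Tmat).mulVec _ = _
    rw [Matrix.mulVec_smul, ha]

/-! ### The hyperbolic measure and Petersson scalar products -/

instance : MeasurableSpace ℍ := borel ℍ

/-- The measure `dx dy` on `ℍ` (hyperbolic weights are carried by the integrands). -/
def μH : Measure ℍ := (MeasureTheory.volume : Measure ℂ).comap (fun τ : ℍ => (τ : ℂ))

/-- The standard (closed) fundamental domain of `SL(2,ℤ)\ℍ`. -/
def fdSL : Set ℍ := ModularGroup.fd

/-- The Petersson scalar product `⟨f, g⟩_ι` of vector-valued forms `f` of type `ρ` and
`g` of type `σ`, with respect to the embedding `ι : 𝟙 ↪ ρ ⊗ σ̄` with `ι(1) = u`: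
`∫_{SL(2,ℤ)\ℍ} ⟨(f ⊗ ḡ)(τ), ι(1)⟩ y^{k-2} dx dy`. -/
def petersson {α β : Type*} [Fintype α] [Fintype β] (k : ℤ) (u : α × β → ℂ)
    (f : ℍ → α → ℂ) (g : ℍ → β → ℂ) : ℂ :=
  ∫ τ in fdSL, (∑ a, ∑ b, f τ a * conj (g τ b) * conj (u (a, b))) *
    ((τ.im : ℂ)) ^ (k - 2) ∂μH

/-- The regularized Petersson scalar product (regularized as the limit of integrals
over truncations of the fundamental domain). -/
def peterssonReg {α β : Type*} [Fintype α] [Fintype β] (k : ℤ) (u : α × β → ℂ)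
    (f : ℍ → α → ℂ) (g : ℍ → β → ℂ) : ℂ :=
  limUnder Filter.atTop (fun t : ℝ =>
    ∫ τ in {τ ∈ fdSL | τ.im ≤ t}, (∑ a, ∑ b, f τ a * conj (g τ b) * conj (u (a, b))) *
      ((τ.im : ℂ)) ^ (k - 2) ∂μH)

/-- The canonical `ι(1) = ∑_w w ⊗ w̄` for forms of the same type. -/
def diagPair (α : Type*) : α × α → ℂ := fun p => if p.1 = p.2 then 1 else 0

/-- A fundamental domain for `Γ\ℍ` obtained from coset representatives. -/
def fdGamma (Γ : Subgroup SL(2, ℤ)) (sec : Cos Γ → SL(2, ℤ)) : Set ℍ :=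
  ⋃ c : Cos Γ, (fun τ => sec c • τ) '' fdSL

/-- The normalized Petersson scalar product of two classical modular forms for `Γ`:
`[SL(2,ℤ):Γ]⁻¹ ∫_{Γ\ℍ} f(τ) conj(g(τ)) y^{k-2} dx dy`. -/
def peterssonGamma (k : ℤ) (Γ : Subgroup SL(2, ℤ)) (sec : Cos Γ → SL(2, ℤ))
    (f g : ℍ → ℂ) : ℂ :=
  ((Γ.index : ℂ))⁻¹ *
    ∫ τ in fdGamma Γ sec, f τ * conj (g τ) * ((τ.im : ℂ)) ^ (k - 2) ∂μH

/-! ### Kernels, finite index, instances -/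

/-- The kernel of a representation. -/
def repKer {ι : Type*} [Fintype ι] (ρ : SL(2, ℤ) → Matrix ι ι ℂ) (hρ : IsRep ρ) :
    Subgroup SL(2, ℤ) where
  carrier := {γ | ρ γ = 1}
  one_mem' := hρ.1
  mul_mem' := by
    intro a b ha hb
    show ρ (_ * _) = 1
    rw [hρ.2, ha, hb, one_mul]
  inv_mem' := by
    intro a ha
    show ρ _⁻¹ = 1
    have h2 := hρ.2 a⁻¹ a
    rw [inv_mul_cancel, hρ.1, ha, mul_one] at h2
    exact h2.symm

instance (Γ : Subgroup SL(2, ℤ)) [Γ.FiniteIndex] : Finite (Cos Γ) :=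
  Finite.of_equiv _ (QuotientGroup.quotientRightRelEquivQuotientLeftRel Γ).symm

instance (Γ : Subgroup SL(2, ℤ)) [Γ.FiniteIndex] : Fintype (Cos Γ) := Fintype.ofFinite _

instance (N : ℕ) [NeZero N] : (CongruenceSubgroup.Gamma N).FiniteIndex := by
  haveI : Finite (Matrix.SpecialLinearGroup (Fin 2) (ZMod N)) := Subtype.finite
  have : (CongruenceSubgroup.Gamma N) = (Matrix.SpecialLinearGroup.map (Int.castRingHom (ZMod N))).ker := rfl
  rw [this]
  infer_instance

instance (N : ℕ) [NeZero N] : (Gamma0 N).FiniteIndex := by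
  refine Subgroup.finiteIndex_of_le (H := CongruenceSubgroup.Gamma N) ?_
  intro γ hγ
  rw [Gamma_mem] at hγ
  rw [Gamma0_mem]
  exact hγ.2.2.1

instance (N : ℕ) [NeZero N] : (Gamma1 N).FiniteIndex := by
  refine Subgroup.finiteIndex_of_le (H := CongruenceSubgroup.Gamma N) ?_
  intro γ hγ
  rw [Gamma_mem] at hγ
  rw [Gamma1_mem]
  exact ⟨hγ.1, hγ.2.2.2, hγ.2.2.1⟩

/-- A sesquilinear scalar product on `ι → ℂ` with Gram matrix `B`:
`⟨v, w⟩_B = ∑_{i,j} conj(w i) B i j v j`. -/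
def sesq {ι : Type*} [Fintype ι] (B : Matrix ι ι ℂ) (v w : ι → ℂ) : ℂ :=
  ∑ i, ∑ j, conj (w i) * B i j * v j

/-- The scalar product `⟨v ⊗ 𝔢_m, w ⊗ 𝔢_{m'}⟩ = δ_{m,m'} ⟨v,w⟩_B` on `V(ρ) ⊗ ℂ[Δ_M]`. -/
def blockDiagGram {ι : Type*} (M : ℕ) (B : Matrix ι ι ℂ) :
    Matrix (ι × Delta M) (ι × Delta M) ℂ :=
  Matrix.of fun p q => if p.2 = q.2 then B p.1 q.1 else 0

/-- The inclusion `𝟙 → T_M 𝟙`, `c ↦ c ∑_{m ∈ Δ_M} 𝔢_m`. -/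
def oneIncl (M : ℕ) : Matrix (Unit × Delta M) Unit ℂ :=
  Matrix.of fun _ _ => 1

/-- `T_M φ` for a homomorphism (intertwining matrix) `φ : ρ → σ`:
`v ⊗ 𝔢_m ↦ φ(v) ⊗ 𝔢_m`. -/
def heckeHom {ι κ : Type*} (M : ℕ) (φ : Matrix κ ι ℂ) :
    Matrix (κ × Delta M) (ι × Delta M) ℂ :=
  fun p q => if p.2 = q.2 then φ p.1 q.1 else 0

/-- The surjection `(T_M ρ) ⊗ (T_M σ) → T_M (ρ ⊗ σ)`:
`(v ⊗ 𝔢_m) ⊗ (w ⊗ 𝔢_{m'}) ↦ δ_{m,m'} (v ⊗ w) ⊗ 𝔢_m`. -/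
def heckeTenProj (ι κ : Type*) (M : ℕ) :
    Matrix ((ι × κ) × Delta M) ((ι × Delta M) × (κ × Delta M)) ℂ :=
  fun p q => if p.1.1 = q.1.1 ∧ p.1.2 = q.2.1 ∧ p.2 = q.1.2 ∧ q.1.2 = q.2.2 then 1 else 0

/-! ### Classical operators, special matrices, and intertwining inclusions -/

set_option linter.unnecessarySeqFocus false

/-- The scalar slash `(f ∣_k m)(τ) = (a/d)^{k/2} f((aτ+b)/d)` for `m = (a b; 0 d)`. -/
def cmslash (k : ℤ) (m : GL2ℤ) (f : ℍ → ℂ) : ℍ → ℂ :=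
  fun τ => (((((m 0 0 : ℤ) : ℝ) / ((m 1 1 : ℤ) : ℝ)) ^ ((k : ℝ) / 2) : ℝ) : ℂ) *
    f (utAct m τ)

/-- `𝔢_γ`, the standard basis vector of `ℂ[Γ\SL(2,ℤ)]` at the coset `Γγ`. -/
def eCos (Γ : Subgroup SL(2, ℤ)) (γ : SL(2, ℤ)) : Cos Γ → ℂ :=
  fun c => if c = mkCos Γ γ then 1 else 0

/-- The matrix `m_M = diag(M, 1) ∈ Δ_M`. -/
def mMat (M : ℕ) (hM : 0 < M) : Delta M :=
  ⟨!![(M : ℤ), 0; 0, 1], by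
    refine ⟨?_, ?_, ?_, ?_, ?_⟩ <;> simp <;> omega⟩

/-- The matrix `m'_M = diag(1, M) ∈ Δ_M`. -/
def mMat' (M : ℕ) (hM : 0 < M) : Delta M :=
  ⟨!![1, 0; 0, (M : ℤ)], by
    refine ⟨?_, ?_, ?_, ?_, ?_⟩ <;> simp <;> omega⟩

/-- The matrix `m_{M,b} = (M b; 0 M) ∈ Δ_{M²}` for `0 ≤ b < M`. -/
def mMatB (M : ℕ) (b : Fin M) : Delta (M * M) :=
  ⟨!![(M : ℤ), (b : ℤ); 0, (M : ℤ)], by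
    have hb := b.2
    refine ⟨?_, ?_, ?_, ?_, ?_⟩ <;> simp <;> omega⟩

/-- The matrix `diag(M, M) ∈ Δ_{M²}`. -/
def mMatMM (M : ℕ) (hM : 0 < M) : Delta (M * M) :=
  ⟨!![(M : ℤ), 0; 0, (M : ℤ)], by
    refine ⟨?_, ?_, ?_, ?_, ?_⟩ <;> simp <;> omega⟩

/-- Rescaling `({\rm sc}_M f)(τ) = f(M τ)`. -/
def scMul (M : ℕ) (f : ℍ → ℂ) : ℍ → ℂ := fun τ => f (utAct !![(M : ℤ), 0; 0, 1] τ)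

/-- Rescaling `({\rm sc}_{1/M} f)(τ) = f(τ / M)`. -/
def scDiv (M : ℕ) (f : ℍ → ℂ) : ℍ → ℂ := fun τ => f (utAct !![1, 0; 0, (M : ℤ)] τ)

/-- The classical Hecke operator
`(f ∣_{k,χ} T_M)(τ) = M^{k-1} ∑_{d ∣ M, 0 ≤ b < d} d^{-k} conj(χ(d)) f((M d⁻¹ τ + b)/d)`. -/
def classicalHecke {N : ℕ} (M : ℕ) (k : ℤ) (χ : DirichletCharacter ℂ N)
    (f : ℍ → ℂ) : ℍ → ℂ :=
  fun τ => (M : ℂ) ^ (k - 1) *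
    ∑ d ∈ M.divisors, ∑ b ∈ Finset.range d,
      ((d : ℂ)) ^ (-k) * conj (χ ((d : ℕ) : ZMod N)) *
        f (utAct !![((M / d : ℕ) : ℤ), (b : ℤ); 0, ((d : ℕ) : ℤ)] τ)

/-- `e_M(x) = exp(2πi x/M)`. -/
def eM (M : ℕ) (x : ℤ) : ℂ := Complex.exp (2 * Real.pi * Complex.I * x / M)

/-- The Gauss sum `G(ε, e_M(b)) = ∑_{a mod M} ε(a) e_M(a b)`. -/
def gaussSumE {M : ℕ} (ε : DirichletCharacter ℂ M) (b : ℤ) : ℂ :=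
  ∑ a ∈ Finset.range M, ε ((a : ℕ) : ZMod M) * eM M ((a : ℤ) * b)

/-- The value `χ(I_{I₂}(δ))` of a Dirichlet character mod `N` on the cocycle
`I_{I₂}(δ) ∈ Γ₀(N)`. -/
def cocVal {N : ℕ} (χ : DirichletCharacter ℂ N) (sec : Cos (Gamma0 N) → SL(2, ℤ))
    (δ : SL(2, ℤ)) : ℂ :=
  dirSL χ (indCoc (Gamma0 N) sec (mkCos (Gamma0 N) 1) δ)

/-- The inclusion `ι_Hecke : ρ_χ → T_M ρ_χ`,
`𝔢_γ ↦ M^{k/2-1} ∑_{m ∈ Δ_M} χ(m) conj(χ(I_{I₂}(I_m(γ)))) 𝔢_{I_m(γ)} ⊗ 𝔢_{m·γ}`. -/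
def iotaHecke {N : ℕ} (M : ℕ) (k : ℤ) (χ : DirichletCharacter ℂ N)
    (sec : Cos (Gamma0 N) → SL(2, ℤ))
    (bar : Delta M → SL(2, ℤ) → Delta M) (coc : Delta M → SL(2, ℤ) → SL(2, ℤ)) :
    Matrix (Cos (Gamma0 N) × Delta M) (Cos (Gamma0 N)) ℂ :=
  Matrix.of fun p c =>
    ((((M : ℝ) ^ ((k : ℝ) / 2 - 1) : ℝ)) : ℂ) *
      ∑ m : Delta M,
        if p.2 = bar m (sec c) ∧ p.1 = mkCos (Gamma0 N) (coc m (sec c)) then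
          χ ((m.1 1 1 : ℤ) : ZMod N) * conj (cocVal χ sec (coc m (sec c)))
        else 0

/-- The inclusion `ι_AL : ρ_{χ'} → T_M ρ_χ`,
`𝔢_γ ↦ conj(χ(I_{I₂}(γ_{M,N} I_{m_M}(γ)))) 𝔢_{γ_{M,N} I_{m_M}(γ)} ⊗ 𝔢_{m_M·γ}`. -/
def iotaAL {N : ℕ} (M : ℕ) (hM : 0 < M) (χ : DirichletCharacter ℂ N)
    (sec : Cos (Gamma0 N) → SL(2, ℤ)) (γMN : SL(2, ℤ))
    (bar : Delta M → SL(2, ℤ) → Delta M) (coc : Delta M → SL(2, ℤ) → SL(2, ℤ)) :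
    Matrix (Cos (Gamma0 N) × Delta M) (Cos (Gamma0 N)) ℂ :=
  Matrix.of fun p c =>
    if p.2 = bar (mMat M hM) (sec c) ∧
        p.1 = mkCos (Gamma0 N) (γMN * coc (mMat M hM) (sec c)) then
      conj (cocVal χ sec (γMN * coc (mMat M hM) (sec c)))
    else 0

/-- The inclusion `ι_old : ρ_{χ_M} → T_M ρ_χ`,
`𝔢_γ ↦ M^{-k/2} conj(χ(I_{I₂}(I_{m_M}(γ)))) 𝔢_{I_{m_M}(γ)} ⊗ 𝔢_{m_M·γ}`. -/
def iotaOld {N : ℕ} (M : ℕ) (hM : 0 < M) (k : ℤ) (χ : DirichletCharacter ℂ N)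
    (sec : Cos (Gamma0 N) → SL(2, ℤ)) (secMN : Cos (Gamma0 (M * N)) → SL(2, ℤ))
    (bar : Delta M → SL(2, ℤ) → Delta M) (coc : Delta M → SL(2, ℤ) → SL(2, ℤ)) :
    Matrix (Cos (Gamma0 N) × Delta M) (Cos (Gamma0 (M * N))) ℂ :=
  Matrix.of fun p c =>
    if p.2 = bar (mMat M hM) (secMN c) ∧
        p.1 = mkCos (Gamma0 N) (coc (mMat M hM) (secMN c)) then
      ((((M : ℝ) ^ (-((k : ℝ) / 2)) : ℝ)) : ℂ) *
        conj (cocVal χ sec (coc (mMat M hM) (secMN c)))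
    else 0

/-- The subgroup `Γ₁(N², N) = {γ : c(γ) ≡ 0 mod N², a(γ) ≡ d(γ) ≡ 1 mod N}`. -/
def Gamma1Sq (N : ℕ) : Subgroup SL(2, ℤ) := Gamma0 (N * N) ⊓ Gamma1 N

instance (N : ℕ) [NeZero N] : (Gamma1Sq N).FiniteIndex := by
  unfold Gamma1Sq
  infer_instance

/-- The inclusion `ι_{Γ(N)} : ρ_{Γ(N)} → T_N ρ_{Γ₁(N²,N)}`,
`𝔢_γ ↦ N^{k/2} 𝔢_{I_{m'_N}(γ)} ⊗ 𝔢_{m'_N·γ}`. -/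
def iotaGammaN (N : ℕ) (hN : 0 < N) (k : ℤ)
    (secG : Cos (CongruenceSubgroup.Gamma N) → SL(2, ℤ))
    (bar : Delta N → SL(2, ℤ) → Delta N) (coc : Delta N → SL(2, ℤ) → SL(2, ℤ)) :
    Matrix (Cos (Gamma1Sq N) × Delta N) (Cos (CongruenceSubgroup.Gamma N)) ℂ :=
  Matrix.of fun p c =>
    if p.2 = bar (mMat' N hN) (secG c) ∧
        p.1 = mkCos (Gamma1Sq N) (coc (mMat' N hN) (secG c)) then
      ((((N : ℝ) ^ ((k : ℝ) / 2) : ℝ)) : ℂ)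
    else 0

/-- The inclusion `ι_twist : ρ_{χ'} → T_{M²} ρ_χ`,
`𝔢_γ ↦ M⁻¹ ∑_{b mod M} G(ε, e_M(-b)) conj(χ(I_{I₂}(I_{m_{M,b}}(γ))))
𝔢_{I_{m_{M,b}}(γ)} ⊗ 𝔢_{m_{M,b}·γ}`. -/
def iotaTwist {N : ℕ} (M : ℕ) (χ : DirichletCharacter ℂ N)
    (ε : DirichletCharacter ℂ M)
    (sec : Cos (Gamma0 N) → SL(2, ℤ)) (sec' : Cos (Gamma0 (N * (M * M))) → SL(2, ℤ))
    (bar : Delta (M * M) → SL(2, ℤ) → Delta (M * M))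
    (coc : Delta (M * M) → SL(2, ℤ) → SL(2, ℤ)) :
    Matrix (Cos (Gamma0 N) × Delta (M * M)) (Cos (Gamma0 (N * (M * M)))) ℂ :=
  Matrix.of fun p c =>
    ((M : ℂ))⁻¹ *
      ∑ b : Fin M,
        if p.2 = bar (mMatB M b) (sec' c) ∧
            p.1 = mkCos (Gamma0 N) (coc (mMatB M b) (sec' c)) then
          gaussSumE ε (-(b : ℤ)) * conj (cocVal χ sec (coc (mMatB M b) (sec' c)))
        else 0

/-- The inclusion `ι_id : ρ_χ → T_{M²} ρ_χ`, `𝔢_γ ↦ 𝔢_γ ⊗ 𝔢_{diag(M,M)}`. -/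
def iotaId {N : ℕ} (M : ℕ) (hM : 0 < M) :
    Matrix (Cos (Gamma0 N) × Delta (M * M)) (Cos (Gamma0 N)) ℂ :=
  Matrix.of fun p c => if p.1 = c ∧ p.2 = mMatMM M hM then 1 else 0


/-! ### Auxiliary lemmas for Statement 11 -/

section Aux

lemma coe_sl_smul (g : SL(2,ℤ)) (τ : ℍ) :
    ((g • τ : ℍ) : ℂ) = (((g 0 0 : ℤ):ℂ) * τ + ((g 0 1 : ℤ):ℂ)) / denomZ g τ := by
  rw [UpperHalfPlane.specialLinearGroup_apply]; simp [denomZ]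

lemma lin_ne_zero (c d : ℤ) (h : ¬(c = 0 ∧ d = 0)) (τ : ℍ) :
    ((c:ℂ) * τ + (d:ℂ)) ≠ 0 := by
  intro h0
  rcases eq_or_ne c 0 with hc | hc
  · subst hc
    simp only [Int.cast_zero, zero_mul, zero_add] at h0
    exact h ⟨rfl, by exact_mod_cast h0⟩
  · have him := congrArg Complex.im h0
    simp only [Complex.add_im, Complex.mul_im, Complex.intCast_re, Complex.intCast_im,
      Complex.zero_im] at him
    have : (c:ℝ) * τ.im = 0 := by
      simpa [UpperHalfPlane.coe_im] using him
    rcases mul_eq_zero.1 this with h' | h'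
    · exact hc (by exact_mod_cast h')
    · exact (UpperHalfPlane.im_ne_zero τ) h'

lemma denomZ_ne_zero (g : SL(2,ℤ)) (τ : ℍ) : denomZ g τ ≠ 0 := by
  apply lin_ne_zero
  rintro ⟨hc, hd⟩
  have := g.2
  rw [Matrix.det_fin_two] at this
  simp only [hc, hd] at this
  simp at this

/-- For an upper-triangular integer matrix with positive diagonal, `utAct` computes
the expected Möbius image. -/
lemma utAct_coe (m : GL2ℤ) (h0 : m 1 0 = 0) (ha : 0 < m 0 0) (hd : 0 < m 1 1) (τ : ℍ) :
    ((utAct m τ : ℍ) : ℂ) = (((m 0 0 : ℤ):ℂ) * τ + ((m 0 1 : ℤ):ℂ)) / ((m 1 1 : ℤ):ℂ) := by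
  have him : 0 < ((((m 0 0 : ℤ) : ℂ) * (τ : ℂ) + ((m 0 1 : ℤ) : ℂ)) / ((m 1 1 : ℤ) : ℂ)).im := by
    have h1 : (((m 0 0 : ℤ) : ℂ) * (τ : ℂ) + ((m 0 1 : ℤ) : ℂ)).im = (m 0 0 : ℝ) * τ.im := by
      simp [Complex.add_im, Complex.mul_im, UpperHalfPlane.coe_im]
    have h2 : ((((m 0 0 : ℤ) : ℂ) * (τ : ℂ) + ((m 0 1 : ℤ) : ℂ)) / ((m 1 1 : ℤ) : ℂ)).im
        = ((m 0 0 : ℝ) * τ.im) / (m 1 1 : ℝ) := by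
      rw [show ((m 1 1 : ℤ) : ℂ) = (((m 1 1 : ℤ) : ℝ) : ℂ) by push_cast; ring,
        Complex.div_ofReal_im, h1]
    rw [h2]
    apply div_pos
    · exact mul_pos (by exact_mod_cast ha) τ.2
    · exact_mod_cast hd
  rw [utAct, dif_pos him]

lemma SL_mul_apply (g s : SL(2,ℤ)) (i j : Fin 2) :
    (g * s) i j = g i 0 * s 0 j + g i 1 * s 1 j := by
  show ((g * s : SL(2,ℤ)) : GL2ℤ) i j = _
  rw [Matrix.SpecialLinearGroup.coe_mul, Matrix.mul_apply, Fin.sum_univ_two]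

lemma denomZ_mul (g s : SL(2,ℤ)) (τ : ℍ) :
    denomZ (g * s) τ = denomZ g (s • τ) * denomZ s τ := by
  have hs := denomZ_ne_zero s τ
  simp only [denomZ, coe_sl_smul] at hs ⊢
  rw [SL_mul_apply g s 1 0, SL_mul_apply g s 1 1]
  push_cast
  field_simp
  ring

lemma cslash_mul (k : ℤ) (g s : SL(2,ℤ)) (f : ℍ → ℂ) (τ : ℍ) :
    cslash k (g * s) f τ = denomZ s τ ^ (-k) * cslash k g f (s • τ) := by
  simp only [cslash, mul_smul, denomZ_mul, mul_zpow]
  ring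

lemma cosMul_mk (Γ : Subgroup SL(2,ℤ)) (g δ : SL(2,ℤ)) :
    cosMul Γ (mkCos Γ g) δ = mkCos Γ (g * δ) := rfl

lemma Gamma0_diag_mul {N : ℕ} {g : SL(2,ℤ)} (hg : g ∈ Gamma0 N) :
    ((g 1 1 : ℤ) : ZMod N) * ((g 0 0 : ℤ) : ZMod N) = 1 := by
  have hdet := g.2
  rw [Matrix.det_fin_two] at hdet
  have hc : ((g 1 0 : ℤ) : ZMod N) = 0 := Gamma0_mem.mp hg
  have : ((g 0 0 * g 1 1 - g 0 1 * g 1 0 : ℤ) : ZMod N) = 1 := by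
    rw [show (g 0 0 * g 1 1 - g 0 1 * g 1 0 : ℤ) = 1 from hdet]; simp
  push_cast at this
  rw [hc, mul_zero, sub_zero] at this
  rw [mul_comm]; exact this

lemma SL_inv_one_one (g : SL(2,ℤ)) : (g⁻¹) 1 1 = g 0 0 := by
  rw [Matrix.SpecialLinearGroup.SL2_inv_expl]; rfl

/-- The modularity/cocycle transfer: `cocVal(δ) ⋅ (f ∣ sec(Γδ)) = f ∣ δ`. -/
lemma cocVal_transfer {N : ℕ} [NeZero N] (χ : DirichletCharacter ℂ N)
    (sec : Cos (Gamma0 N) → SL(2, ℤ)) (hsec : IsSection (Gamma0 N) sec)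
    (k : ℤ) (f : ℍ → ℂ) (hf : IsModFormChi k χ f) (δ : SL(2,ℤ)) (τ : ℍ) :
    cocVal χ sec δ * cslash k (sec (mkCos (Gamma0 N) δ)) f τ = cslash k δ f τ := by
  set s := sec (mkCos (Gamma0 N) δ) with hs
  have hmk : mkCos (Gamma0 N) s = mkCos (Gamma0 N) δ := hsec.1 _
  have hg : δ * s⁻¹ ∈ Gamma0 N := by
    have h1 : (QuotientGroup.rightRel (Gamma0 N)).r s δ := Quotient.eq''.mp hmk
    rwa [QuotientGroup.rightRel_apply] at h1
  have hcv : cocVal χ sec δ = dirSL χ (δ * s⁻¹) := by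
    unfold cocVal indCoc
    rw [hsec.2, one_mul, cosMul_mk, one_mul, ← hs]
  have hmod := congrFun (hf.2.1 (δ * s⁻¹) hg) (s • τ)
  have hdec : cslash k δ f τ = denomZ s τ ^ (-k) * cslash k (δ * s⁻¹) f (s • τ) := by
    conv_lhs => rw [show δ = (δ * s⁻¹) * s by group]
    exact cslash_mul k (δ * s⁻¹) s f τ
  have hone : dirSL χ (δ * s⁻¹) * dirSL χ (δ * s⁻¹)⁻¹ = 1 := by
    rw [dirSL, dirSL, SL_inv_one_one, ← _root_.map_mul]
    rw [Gamma0_diag_mul hg, _root_.map_one]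
  have hfs : f (s • τ) = dirSL χ (δ * s⁻¹)⁻¹ * cslash k (δ * s⁻¹) f (s • τ) := hmod.symm
  calc cocVal χ sec δ * cslash k s f τ
      = dirSL χ (δ * s⁻¹) * (denomZ s τ ^ (-k) * f (s • τ)) := by rw [hcv]; rfl
    _ = (dirSL χ (δ * s⁻¹) * dirSL χ (δ * s⁻¹)⁻¹) *
          (denomZ s τ ^ (-k) * cslash k (δ * s⁻¹) f (s • τ)) := by rw [hfs]; ring
    _ = cslash k δ f τ := by rw [hone, one_mul, ← hdec]

lemma rpow_half_mul {x y : ℝ} (hx : 0 < x) (hy : 0 < y) (κ : ℝ) :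
    (x / y) ^ (κ / 2) * y ^ κ = (x * y) ^ (κ / 2) := by
  have hy2 : y ^ κ = y ^ (κ / 2) * y ^ (κ / 2) := by
    rw [← Real.rpow_add hy]; ring_nf
  rw [Real.div_rpow hx.le hy.le, Real.mul_rpow hx.le hy.le, hy2]
  field_simp

lemma delta_a_pos {M : ℕ} (m : Delta M) : 0 < m.1 0 0 := m.2.2.1

lemma delta_d_pos {M : ℕ} (hM : 0 < M) (m : Delta M) : 0 < m.1 1 1 := by
  have h1 := m.2.2.1
  have h2 := m.2.2.2.1
  nlinarith [(Int.natCast_pos.mpr hM : (0:ℤ) < (M:ℤ))]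

/-- Bridge: complex `zpow` of a positive integer cast as a real `rpow`. -/
lemma zpow_int_cast_eq_rpow (n : ℤ) (hn : 0 < n) (k : ℤ) :
    ((n:ℂ)) ^ (-k) = (((n:ℝ) ^ (-(k:ℝ)) : ℝ) : ℂ) := by
  have h1 : ((n:ℤ):ℂ) = (((n:ℝ)):ℂ) := by push_cast; ring
  rw [h1, ← Complex.ofReal_zpow]
  congr 1
  rw [show -(k:ℝ) = ((-k : ℤ) : ℝ) by push_cast; ring, Real.rpow_intCast]


lemma div_helper (a n b d w : ℂ) (hd : d ≠ 0) (hw : w ≠ 0) :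
    ((a * (n / w) + b) / d) * (d * w) = a * n + b * w := by
  field_simp

/-- The entry equations of `coc m γ * bar m γ = m * γ`. -/
lemma hecke_entries {M : ℕ} {bar : Delta M → SL(2, ℤ) → Delta M}
    {coc : Delta M → SL(2, ℤ) → SL(2, ℤ)} (hd : HeckeData M bar coc)
    (m : Delta M) (β : SL(2,ℤ)) (i j : Fin 2) :
    coc m β i 0 * (bar m β).1 0 j + coc m β i 1 * (bar m β).1 1 j
      = m.1 i 0 * β 0 j + m.1 i 1 * β 1 j := by
  have h := hd m β
  have := congrFun (congrFun h i) j
  simpa [Matrix.mul_apply, Fin.sum_univ_two] using this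

/-- The denominator relation `j(g, τ') d' = d j(β, τ)`. -/
lemma hecke_denom {M : ℕ} (hM : 0 < M) {bar : Delta M → SL(2, ℤ) → Delta M}
    {coc : Delta M → SL(2, ℤ) → SL(2, ℤ)} (hd : HeckeData M bar coc)
    (m : Delta M) (β : SL(2,ℤ)) (τ : ℍ) :
    denomZ (coc m β) (utAct (bar m β).1 τ) * (((bar m β).1 1 1 : ℤ) : ℂ)
      = ((m.1 1 1 : ℤ) : ℂ) * denomZ β τ := by
  set D := bar m β with hD
  set g := coc m β with hg
  have e10 : g 1 0 * D.1 0 0 = m.1 1 1 * β 1 0 := by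
    have := hecke_entries hd m β 1 0
    rw [D.2.1, m.2.1] at this; simpa using this
  have e11 : g 1 0 * D.1 0 1 + g 1 1 * D.1 1 1 = m.1 1 1 * β 1 1 := by
    have := hecke_entries hd m β 1 1
    rw [m.2.1] at this; simpa using this
  have E10 : (g 1 0 : ℂ) * (D.1 0 0 : ℂ) = (m.1 1 1 : ℂ) * (β 1 0 : ℂ) := by
    exact_mod_cast congrArg (fun z : ℤ => (z : ℂ)) e10
  have E11 : (g 1 0 : ℂ) * (D.1 0 1 : ℂ) + (g 1 1 : ℂ) * (D.1 1 1 : ℂ)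
      = (m.1 1 1 : ℂ) * (β 1 1 : ℂ) := by
    exact_mod_cast congrArg (fun z : ℤ => (z : ℂ)) e11
  have hd' : ((D.1 1 1 : ℤ) : ℂ) ≠ 0 := by
    exact_mod_cast (delta_d_pos hM D).ne'
  rw [denomZ, utAct_coe D.1 D.2.1 (delta_a_pos D) (delta_d_pos hM D), denomZ]
  field_simp
  linear_combination (τ : ℂ) * E10 + E11

/-- The point relation `utAct m (β • τ) = g • utAct D τ`. -/
lemma hecke_point {M : ℕ} (hM : 0 < M) {bar : Delta M → SL(2, ℤ) → Delta M}
    {coc : Delta M → SL(2, ℤ) → SL(2, ℤ)} (hd : HeckeData M bar coc)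
    (m : Delta M) (β : SL(2,ℤ)) (τ : ℍ) :
    utAct m.1 (β • τ) = coc m β • utAct (bar m β).1 τ := by
  set D := bar m β with hDdef
  set g := coc m β with hgdef
  have e00 : g 0 0 * D.1 0 0 = m.1 0 0 * β 0 0 + m.1 0 1 * β 1 0 := by
    have := hecke_entries hd m β 0 0
    rw [D.2.1] at this; simpa using this
  have e01 : g 0 0 * D.1 0 1 + g 0 1 * D.1 1 1 = m.1 0 0 * β 0 1 + m.1 0 1 * β 1 1 := by
    simpa using hecke_entries hd m β 0 1
  have E00 : (g 0 0 : ℂ) * (D.1 0 0 : ℂ) = (m.1 0 0 : ℂ) * (β 0 0 : ℂ) + (m.1 0 1 : ℂ) * (β 1 0 : ℂ) := by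
    exact_mod_cast congrArg (fun z : ℤ => (z : ℂ)) e00
  have E01 : (g 0 0 : ℂ) * (D.1 0 1 : ℂ) + (g 0 1 : ℂ) * (D.1 1 1 : ℂ)
      = (m.1 0 0 : ℂ) * (β 0 1 : ℂ) + (m.1 0 1 : ℂ) * (β 1 1 : ℂ) := by
    exact_mod_cast congrArg (fun z : ℤ => (z : ℂ)) e01
  have hden : denomZ g (utAct D.1 τ) * ((D.1 1 1 : ℤ) : ℂ) = ((m.1 1 1 : ℤ) : ℂ) * denomZ β τ :=
    hecke_denom hM hd m β τ
  have hβ : denomZ β τ ≠ 0 := denomZ_ne_zero β τ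
  have hgden : denomZ g (utAct D.1 τ) ≠ 0 := denomZ_ne_zero g _
  have hd' : ((D.1 1 1 : ℤ) : ℂ) ≠ 0 := by exact_mod_cast (delta_d_pos hM D).ne'
  have hdm : ((m.1 1 1 : ℤ) : ℂ) ≠ 0 := by exact_mod_cast (delta_d_pos hM m).ne'
  have hne : ((m.1 1 1 : ℤ) : ℂ) * denomZ β τ ≠ 0 := mul_ne_zero hdm hβ
  have hL : ((utAct m.1 (β • τ) : ℍ) : ℂ) * (((m.1 1 1 : ℤ) : ℂ) * denomZ β τ)
      = ((m.1 0 0 : ℤ) : ℂ) * (((β 0 0 : ℤ) : ℂ) * τ + ((β 0 1 : ℤ) : ℂ))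
        + ((m.1 0 1 : ℤ) : ℂ) * denomZ β τ := by
    rw [utAct_coe m.1 m.2.1 (delta_a_pos m) (delta_d_pos hM m), coe_sl_smul β τ]
    rw [div_helper _ _ _ _ _ hdm hβ]
  have hR : ((g • utAct D.1 τ : ℍ) : ℂ) * (((m.1 1 1 : ℤ) : ℂ) * denomZ β τ)
      = ((m.1 0 0 : ℤ) : ℂ) * (((β 0 0 : ℤ) : ℂ) * τ + ((β 0 1 : ℤ) : ℂ))
        + ((m.1 0 1 : ℤ) : ℂ) * denomZ β τ := by
    rw [coe_sl_smul g _, ← hden, utAct_coe D.1 D.2.1 (delta_a_pos D) (delta_d_pos hM D)]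
    rw [div_helper _ _ _ _ _ hgden hd']
    rw [show denomZ β τ = ((β 1 0 : ℤ) : ℂ) * τ + ((β 1 1 : ℤ) : ℂ) from rfl]
    linear_combination (τ : ℂ) * E00 + E01
  exact UpperHalfPlane.ext (mul_right_cancel₀ hne (hL.trans hR.symm))

lemma zpow_int_cast_eq_rpow' (n : ℤ) (j : ℤ) :
    ((n:ℂ)) ^ j = (((n:ℝ) ^ ((j:ℝ)) : ℝ) : ℂ) ∨ (n:ℝ) < 0 := by
  rcases lt_or_ge (n:ℝ) 0 with h | h
  · exact Or.inr h
  · left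
    have h1 : ((n:ℤ):ℂ) = (((n:ℝ)):ℂ) := by push_cast; ring
    rw [h1, ← Complex.ofReal_zpow]
    congr 1
    rw [Real.rpow_intCast]

lemma zpow_pos_cast_eq_rpow {n : ℤ} (hn : 0 < n) (j : ℤ) :
    ((n:ℂ)) ^ j = (((n:ℝ) ^ ((j:ℝ)) : ℝ) : ℂ) := by
  have h1 : ((n:ℤ):ℂ) = (((n:ℝ)):ℂ) := by push_cast; ring
  rw [h1, ← Complex.ofReal_zpow]
  congr 1
  rw [Real.rpow_intCast]

lemma real_factor {aD dD am dm Mr κ : ℝ} (h1 : 0 < aD) (h2 : 0 < dD) (h3 : 0 < am)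
    (h4 : 0 < dm) (p1 : aD * dD = Mr) (p2 : am * dm = Mr) :
    (aD / dD) ^ (κ / 2) * (dm ^ (-κ) / dD ^ (-κ)) = (am / dm) ^ (κ / 2) := by
  have hA := rpow_half_mul h1 h2 κ
  have hB := rpow_half_mul h3 h4 κ
  rw [p1] at hA; rw [p2] at hB
  have hdDκ : (0:ℝ) < dD ^ κ := Real.rpow_pos_of_pos h2 κ
  have hdmκ : (0:ℝ) < dm ^ κ := Real.rpow_pos_of_pos h4 κ
  rw [Real.rpow_neg h4.le, Real.rpow_neg h2.le]
  rw [inv_div_inv]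
  field_simp
  linear_combination hA - hB

lemma delta_a_posR {M : ℕ} (m : Delta M) : (0:ℝ) < ((m.1 0 0 : ℤ) : ℝ) := by
  have := delta_a_pos m; exact_mod_cast this

lemma delta_d_posR {M : ℕ} (hM : 0 < M) (m : Delta M) : (0:ℝ) < ((m.1 1 1 : ℤ) : ℝ) := by
  have := delta_d_pos hM m; exact_mod_cast this

lemma delta_mul_eq {M : ℕ} (m : Delta M) :
    ((m.1 0 0 : ℤ) : ℝ) * ((m.1 1 1 : ℤ) : ℝ) = (M : ℝ) := by
  exact_mod_cast congrArg (fun z : ℤ => (z : ℝ)) m.2.2.2.1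

lemma hecke_factor {M : ℕ} (hM : 0 < M) {bar : Delta M → SL(2, ℤ) → Delta M}
    {coc : Delta M → SL(2, ℤ) → SL(2, ℤ)} (hd : HeckeData M bar coc)
    (k : ℤ) (m : Delta M) (β : SL(2,ℤ)) (τ : ℍ) :
    (Complex.ofReal (((((bar m β).1 0 0 : ℤ):ℝ) / (((bar m β).1 1 1 : ℤ):ℝ)) ^ ((k:ℝ)/2)))
      * denomZ (coc m β) (utAct (bar m β).1 τ) ^ (-k)
    = (Complex.ofReal (((((m.1 0 0 : ℤ)):ℝ) / ((m.1 1 1 : ℤ):ℝ)) ^ ((k:ℝ)/2)))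
      * denomZ β τ ^ (-k) := by
  set D := bar m β with hDdef
  set g := coc m β with hgdef
  have hd' : ((D.1 1 1 : ℤ) : ℂ) ≠ 0 := by exact_mod_cast (delta_d_pos hM D).ne'
  have hgd : denomZ g (utAct D.1 τ) = ((m.1 1 1 : ℤ):ℂ) * denomZ β τ / ((D.1 1 1 : ℤ):ℂ) := by
    rw [eq_div_iff hd']
    exact hecke_denom hM hd m β τ
  rw [hgd, div_zpow, mul_zpow]
  rw [zpow_pos_cast_eq_rpow (delta_d_pos hM m) (-k), zpow_pos_cast_eq_rpow (delta_d_pos hM D) (-k)]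
  rw [show (((-k : ℤ)):ℝ) = -(k:ℝ) by push_cast; ring]
  have key : (((D.1 0 0 : ℤ):ℝ) / ((D.1 1 1 : ℤ):ℝ)) ^ ((k:ℝ)/2)
      * (((m.1 1 1 : ℤ):ℝ) ^ (-(k:ℝ)) / ((D.1 1 1 : ℤ):ℝ) ^ (-(k:ℝ)))
      = (((m.1 0 0 : ℤ):ℝ) / ((m.1 1 1 : ℤ):ℝ)) ^ ((k:ℝ)/2) := by
    exact real_factor (delta_a_posR D) (delta_d_posR hM D)
      (delta_a_posR m) (delta_d_posR hM m)
      (delta_mul_eq D) (delta_mul_eq m) (κ := (k:ℝ))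
  calc (Complex.ofReal ((((D.1 0 0 : ℤ):ℝ) / ((D.1 1 1 : ℤ):ℝ)) ^ ((k:ℝ)/2)))
        * ((Complex.ofReal (((m.1 1 1 : ℤ):ℝ) ^ (-(k:ℝ))) * denomZ β τ ^ (-k))
          / (Complex.ofReal (((D.1 1 1 : ℤ):ℝ) ^ (-(k:ℝ)))))
      = (Complex.ofReal ((((D.1 0 0 : ℤ):ℝ) / ((D.1 1 1 : ℤ):ℝ)) ^ ((k:ℝ)/2))
          * (Complex.ofReal (((m.1 1 1 : ℤ):ℝ) ^ (-(k:ℝ)))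
            / Complex.ofReal (((D.1 1 1 : ℤ):ℝ) ^ (-(k:ℝ))))) * denomZ β τ ^ (-k) := by
        ring
    _ = (Complex.ofReal ((((m.1 0 0 : ℤ):ℝ) / ((m.1 1 1 : ℤ):ℝ)) ^ ((k:ℝ)/2))) * denomZ β τ ^ (-k) := by
        rw [← Complex.ofReal_div, ← Complex.ofReal_mul, key]

lemma hecke_slash_m {M : ℕ} (hM : 0 < M) {bar : Delta M → SL(2, ℤ) → Delta M}
    {coc : Delta M → SL(2, ℤ) → SL(2, ℤ)} (hd : HeckeData M bar coc)
    (k : ℤ) (f : ℍ → ℂ) (m : Delta M) (β : SL(2,ℤ)) (τ : ℍ) :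
    (Complex.ofReal (((((bar m β).1 0 0 : ℤ):ℝ) / (((bar m β).1 1 1 : ℤ):ℝ)) ^ ((k:ℝ)/2)))
      * cslash k (coc m β) f (utAct (bar m β).1 τ)
    = (Complex.ofReal ((((m.1 0 0 : ℤ):ℝ) / ((m.1 1 1 : ℤ):ℝ)) ^ ((k:ℝ)/2)))
      * (denomZ β τ ^ (-k) * f (utAct m.1 (β • τ))) := by
  rw [cslash, hecke_point hM hd m β τ, ← mul_assoc, ← mul_assoc,
    hecke_factor hM hd k m β τ]

lemma coeff_lhs {M : ℕ} (hM : 0 < M) (k : ℤ) (m : Delta M) :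
    (M:ℂ) ^ (k-1) * ((m.1 1 1 : ℤ):ℂ) ^ (-k)
    = Complex.ofReal ((M:ℝ) ^ ((k:ℝ)/2 - 1))
      * Complex.ofReal ((((m.1 0 0 : ℤ):ℝ) / ((m.1 1 1 : ℤ):ℝ)) ^ ((k:ℝ)/2)) := by
  have hMpos : (0:ℝ) < (M:ℝ) := by exact_mod_cast hM
  have hMZ : (0:ℤ) < ((M:ℕ):ℤ) := by exact_mod_cast hM
  have h1 : (M:ℂ) ^ (k-1) = Complex.ofReal ((M:ℝ) ^ ((k:ℝ) - 1)) := by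
    rw [show ((M:ℕ):ℂ) = (((M:ℕ):ℤ):ℂ) by push_cast; ring,
      zpow_pos_cast_eq_rpow hMZ (k-1),
      show ((((M:ℕ):ℤ)):ℝ) = (M:ℝ) by push_cast; ring,
      show (((k-1 : ℤ)):ℝ) = (k:ℝ) - 1 by push_cast; ring]
  have h2 : ((m.1 1 1 : ℤ):ℂ) ^ (-k)
      = Complex.ofReal (((m.1 1 1 : ℤ):ℝ) ^ (-(k:ℝ))) := by
    rw [zpow_pos_cast_eq_rpow (delta_d_pos hM m) (-k),
      show (((-k : ℤ)):ℝ) = -(k:ℝ) by push_cast; ring]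
  rw [h1, h2, ← Complex.ofReal_mul, ← Complex.ofReal_mul]
  congr 1
  have hB := rpow_half_mul (delta_a_posR m) (delta_d_posR hM m) (k:ℝ)
  rw [delta_mul_eq m] at hB
  have hsplit : (M:ℝ) ^ ((k:ℝ)-1) = (M:ℝ) ^ ((k:ℝ)/2-1) * (M:ℝ) ^ ((k:ℝ)/2) := by
    rw [← Real.rpow_add hMpos]; ring_nf
  have hdmκ : (0:ℝ) < ((m.1 1 1 : ℤ):ℝ) ^ (k:ℝ) :=
    Real.rpow_pos_of_pos (delta_d_posR hM m) _
  rw [hsplit, Real.rpow_neg (delta_d_posR hM m).le, ← hB]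
  field_simp

lemma classicalHecke_sum {N : ℕ} (M : ℕ) (hM : 0 < M) (k : ℤ)
    (χ : DirichletCharacter ℂ N) (f : ℍ → ℂ) (w : ℍ) :
    classicalHecke M k χ f w
    = (M:ℂ) ^ (k-1) * ∑ m : Delta M,
        ((m.1 1 1 : ℤ):ℂ) ^ (-k) * conj (χ ((m.1 1 1 : ℤ) : ZMod N)) * f (utAct m.1 w) := by
  rw [classicalHecke]
  congr 1
  rw [Finset.sum_sigma' (M.divisors) (fun d => Finset.range d)
    (fun d b => ((d:ℂ)) ^ (-k) * conj (χ ((d:ℕ) : ZMod N))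
      * f (utAct !![((M/d : ℕ):ℤ), (b:ℤ); 0, ((d:ℕ):ℤ)] w))]
  symm
  refine Finset.sum_bij
    (fun (m : Delta M) _ => (⟨(m.1 1 1).toNat, (m.1 0 1).toNat⟩ : Σ _ : ℕ, ℕ)) ?_ ?_ ?_ ?_
  · intro m _
    have hc := m.2.1
    have ha := m.2.2.1
    have hdet := m.2.2.2.1
    have hb0 := m.2.2.2.2.1
    have hbd := m.2.2.2.2.2
    have hdpos := delta_d_pos hM m
    simp only [Finset.mem_sigma, Nat.mem_divisors, Finset.mem_range]
    have key : ((m.1 1 1).toNat * (m.1 0 0).toNat : ℕ) = M := by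
      have h1 : (((m.1 1 1).toNat * (m.1 0 0).toNat : ℕ) : ℤ) = (M:ℤ) := by
        push_cast
        rw [Int.toNat_of_nonneg hdpos.le, Int.toNat_of_nonneg ha.le]
        linarith [hdet]
      exact_mod_cast h1
    refine ⟨⟨⟨(m.1 0 0).toNat, key.symm⟩, hM.ne'⟩, ?_⟩
    omega
  · intro m1 h1 m2 h2 h
    injection h with hd hb
    have hb' : (m1.1 0 1).toNat = (m2.1 0 1).toNat := hb
    have e3 : m1.1 1 1 = m2.1 1 1 := by
      have p1 := delta_d_pos hM m1; have p2 := delta_d_pos hM m2; omega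
    have e2 : m1.1 0 1 = m2.1 0 1 := by
      have p1 := m1.2.2.2.2.1; have p2 := m2.2.2.2.2.1; omega
    have e1 : m1.1 0 0 = m2.1 0 0 := by
      have q1 := m1.2.2.2.1; have q2 := m2.2.2.2.1
      have p1 := delta_d_pos hM m1
      rw [← e3] at q2
      exact mul_right_cancel₀ p1.ne' (q1.trans q2.symm)
    apply Subtype.ext
    ext i j
    fin_cases i <;> fin_cases j
    · exact e1
    · exact e2
    · show m1.1 1 0 = m2.1 1 0
      rw [m1.2.1, m2.2.1]
    · exact e3
  · rintro ⟨d, b⟩ hp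
    simp only [Finset.mem_sigma, Nat.mem_divisors, Finset.mem_range] at hp
    obtain ⟨⟨hdvd, hMne⟩, hb⟩ := hp
    have hdpos : 0 < d := by omega
    have hapos : 0 < M / d := Nat.div_pos (Nat.le_of_dvd hM hdvd) hdpos
    refine ⟨⟨!![((M/d : ℕ):ℤ), (b:ℤ); 0, ((d:ℕ):ℤ)], ?_, ?_, ?_, ?_, ?_⟩,
      Finset.mem_univ _, ?_⟩
    · simp
    · simpa using (by exact_mod_cast hapos : (0:ℤ) < ((M/d : ℕ):ℤ))
    · show ((M/d : ℕ):ℤ) * ((d:ℕ):ℤ) = (M:ℤ)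
      exact_mod_cast Nat.div_mul_cancel hdvd
    · simp
    · show ((b:ℕ):ℤ) < ((d:ℕ):ℤ)
      exact_mod_cast hb
    · show (⟨(((d:ℕ):ℤ)).toNat, (((b:ℕ):ℤ)).toNat⟩ : Σ _ : ℕ, ℕ) = ⟨d, b⟩
      simp
  · intro m _
    have hdpos := delta_d_pos hM m
    have hb0 := m.2.2.2.2.1
    have hdd : (((m.1 1 1).toNat : ℕ):ℤ) = m.1 1 1 := Int.toNat_of_nonneg hdpos.le
    have hbb : (((m.1 0 1).toNat : ℕ):ℤ) = m.1 0 1 := Int.toNat_of_nonneg hb0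
    have hmd : (M / (m.1 1 1).toNat : ℕ) = (m.1 0 0).toNat := by
      have ha := m.2.2.1
      have hdet := m.2.2.2.1
      have key : ((m.1 0 0).toNat * (m.1 1 1).toNat : ℕ) = M := by
        have h1 : (((m.1 0 0).toNat * (m.1 1 1).toNat : ℕ) : ℤ) = (M:ℤ) := by
          push_cast
          rw [Int.toNat_of_nonneg hdpos.le, Int.toNat_of_nonneg ha.le]
          linarith [hdet]
        exact_mod_cast h1
      exact Nat.div_eq_of_eq_mul_left (by omega) key.symm
    have hmat : !![((M/(m.1 1 1).toNat : ℕ):ℤ), (((m.1 0 1).toNat : ℕ):ℤ);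
        0, ((((m.1 1 1).toNat : ℕ)):ℤ)] = m.1 := by
      have ha := m.2.2.1
      ext i j
      fin_cases i <;> fin_cases j
      · show ((M/(m.1 1 1).toNat : ℕ):ℤ) = m.1 0 0
        rw [hmd]
        exact Int.toNat_of_nonneg ha.le
      · show (((m.1 0 1).toNat : ℕ):ℤ) = m.1 0 1
        exact hbb
      · show (0:ℤ) = m.1 1 0
        exact m.2.1.symm
      · show (((m.1 1 1).toNat : ℕ):ℤ) = m.1 1 1
        exact hdd
    have hχ : ((((m.1 1 1).toNat : ℕ)) : ZMod N) = ((m.1 1 1 : ℤ) : ZMod N) := by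
      rw [show ((((m.1 1 1).toNat : ℕ)) : ZMod N) = (((((m.1 1 1).toNat : ℕ)):ℤ) : ZMod N) by
        push_cast; ring, hdd]
    have hC : ((((m.1 1 1).toNat : ℕ)) : ℂ) = ((m.1 1 1 : ℤ) : ℂ) := by
      rw [show ((((m.1 1 1).toNat : ℕ)) : ℂ) = (((((m.1 1 1).toNat : ℕ)):ℤ) : ℂ) by
        push_cast; ring, hdd]
    rw [hmat, hχ, hC]

/-- Reduction of the pairing against `ι_Hecke` to a sum over `Δ_M`. -/
lemma rhs_reduce {N : ℕ} [NeZero N] (M : ℕ) (k : ℤ) (χ : DirichletCharacter ℂ N)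
    (sec : Cos (Gamma0 N) → SL(2, ℤ))
    (bar : Delta M → SL(2, ℤ) → Delta M) (coc : Delta M → SL(2, ℤ) → SL(2, ℤ))
    (c : Cos (Gamma0 N)) (x : Cos (Gamma0 N) × Delta M → ℂ) :
    ∑ p : Cos (Gamma0 N) × Delta M, conj (iotaHecke M k χ sec bar coc p c) * x p
    = ∑ m : Delta M, Complex.ofReal ((M:ℝ) ^ ((k:ℝ)/2 - 1))
        * (conj (χ ((m.1 1 1 : ℤ) : ZMod N))
          * (cocVal χ sec (coc m (sec c))
            * x (mkCos (Gamma0 N) (coc m (sec c)), bar m (sec c)))) := by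
  have step1 : ∀ p : Cos (Gamma0 N) × Delta M,
      conj (iotaHecke M k χ sec bar coc p c) * x p
      = ∑ m : Delta M, (if p = (mkCos (Gamma0 N) (coc m (sec c)), bar m (sec c)) then
          Complex.ofReal ((M:ℝ) ^ ((k:ℝ)/2 - 1))
            * (conj (χ ((m.1 1 1 : ℤ) : ZMod N))
              * (cocVal χ sec (coc m (sec c)) * x p)) else 0) := by
    intro p
    rw [iotaHecke, Matrix.of_apply]
    rw [_root_.map_mul, map_sum]
    rw [Finset.mul_sum, Finset.sum_mul]
    refine Finset.sum_congr rfl fun m _ => ?_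
    simp only [apply_ite (starRingEnd ℂ), _root_.map_zero, _root_.map_mul,
      Complex.conj_conj, Complex.conj_ofReal]
    have hcond : (p.2 = bar m (sec c) ∧ p.1 = mkCos (Gamma0 N) (coc m (sec c)))
        ↔ p = (mkCos (Gamma0 N) (coc m (sec c)), bar m (sec c)) := by
      rw [Prod.ext_iff]; tauto
    rw [if_congr hcond rfl rfl]
    simp only [mul_ite, mul_zero, ite_mul, zero_mul]
    exact if_congr Iff.rfl (by ring) rfl
  calc ∑ p : Cos (Gamma0 N) × Delta M, conj (iotaHecke M k χ sec bar coc p c) * x p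
      = ∑ p : Cos (Gamma0 N) × Delta M, ∑ m : Delta M,
          (if p = (mkCos (Gamma0 N) (coc m (sec c)), bar m (sec c)) then
            Complex.ofReal ((M:ℝ) ^ ((k:ℝ)/2 - 1))
              * (conj (χ ((m.1 1 1 : ℤ) : ZMod N))
                * (cocVal χ sec (coc m (sec c)) * x p)) else 0) :=
        Finset.sum_congr rfl fun p _ => step1 p
    _ = ∑ m : Delta M, ∑ p : Cos (Gamma0 N) × Delta M,
          (if p = (mkCos (Gamma0 N) (coc m (sec c)), bar m (sec c)) then
            Complex.ofReal ((M:ℝ) ^ ((k:ℝ)/2 - 1))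
              * (conj (χ ((m.1 1 1 : ℤ) : ZMod N))
                * (cocVal χ sec (coc m (sec c)) * x p)) else 0) := Finset.sum_comm
    _ = _ := by
        refine Finset.sum_congr rfl fun m _ => ?_
        rw [Finset.sum_ite_eq' Finset.univ
          ((mkCos (Gamma0 N) (coc m (sec c)), bar m (sec c)) : Cos (Gamma0 N) × Delta M)]
        simp

/-- The per-coset identity underlying Statement 11. -/
lemma main_key {N : ℕ} [NeZero N] (M : ℕ) (hM : 0 < M) (k : ℤ)
    (χ : DirichletCharacter ℂ N)
    (sec : Cos (Gamma0 N) → SL(2, ℤ)) (hsec : IsSection (Gamma0 N) sec)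
    (bar : Delta M → SL(2, ℤ) → Delta M) (coc : Delta M → SL(2, ℤ) → SL(2, ℤ))
    (hd : HeckeData M bar coc) (f : ℍ → ℂ) (hf : IsModFormChi k χ f)
    (c : Cos (Gamma0 N)) (τ : ℍ) :
    indForm (Gamma0 N) sec k (classicalHecke M k χ f) τ c
    = ∑ p : Cos (Gamma0 N) × Delta M,
        conj (iotaHecke M k χ sec bar coc p c)
          * heckeT M k (indForm (Gamma0 N) sec k f) τ p := by
  rw [rhs_reduce]
  have hx : ∀ m : Delta M,
      cocVal χ sec (coc m (sec c))
        * heckeT M k (indForm (Gamma0 N) sec k f) τ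
            (mkCos (Gamma0 N) (coc m (sec c)), bar m (sec c))
      = Complex.ofReal ((((m.1 0 0 : ℤ):ℝ) / ((m.1 1 1 : ℤ):ℝ)) ^ ((k:ℝ)/2))
          * (denomZ (sec c) τ ^ (-k) * f (utAct m.1 (sec c • τ))) := by
    intro m
    have h1 : heckeT M k (indForm (Gamma0 N) sec k f) τ
        (mkCos (Gamma0 N) (coc m (sec c)), bar m (sec c))
        = Complex.ofReal (((((bar m (sec c)).1 0 0 : ℤ):ℝ)
            / (((bar m (sec c)).1 1 1 : ℤ):ℝ)) ^ ((k:ℝ)/2))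
          * cslash k (sec (mkCos (Gamma0 N) (coc m (sec c)))) f
              (utAct (bar m (sec c)).1 τ) := by
      rw [heckeT, mslash]
      simp only [Pi.smul_apply, smul_eq_mul]
      rfl
    rw [h1, mul_comm (cocVal χ sec (coc m (sec c))), mul_assoc,
      mul_comm (cslash k (sec (mkCos (Gamma0 N) (coc m (sec c)))) f
        (utAct (bar m (sec c)).1 τ)) (cocVal χ sec (coc m (sec c))),
      cocVal_transfer χ sec hsec k f hf (coc m (sec c)) (utAct (bar m (sec c)).1 τ),
      hecke_slash_m hM hd k f m (sec c) τ]
  rw [indForm, cslash, classicalHecke_sum M hM k χ f (sec c • τ), Finset.mul_sum,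
    Finset.mul_sum]
  refine Finset.sum_congr rfl fun m _ => ?_
  rw [hx m]
  have hco := coeff_lhs hM k m
  linear_combination (conj (χ ((m.1 1 1 : ℤ) : ZMod N))
    * f (utAct m.1 (sec c • τ)) * denomZ (sec c) τ ^ (-k)) * hco

end Aux

end VVMF

open VVMF

/-- The inclusion `ι_Hecke` and the adjoint projection
`π_Hecke = ι_Heckeᴴ` intertwine the vector-valued Hecke operator and the classical Hecke
operator with the induction map: for every `f ∈ M_k(χ)` and `v ∈ V(ρ_χ)`,
`⟨Ind(f ∣_{k,χ} T_M), v⟩ = ⟨π_Hecke(T_M Ind f), v⟩ = ⟨T_M Ind f, ι_Hecke v⟩`. -/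
theorem classical_hecke_from_vector_valued {N : ℕ} [NeZero N] (M : ℕ) (hM : 0 < M)
    (hcop : Nat.Coprime M N) (k : ℤ) (χ : DirichletCharacter ℂ N)
    (sec : Cos (Gamma0 N) → SL(2, ℤ)) (hsec : IsSection (Gamma0 N) sec)
    (bar : Delta M → SL(2, ℤ) → Delta M) (coc : Delta M → SL(2, ℤ) → SL(2, ℤ))
    (hd : HeckeData M bar coc)
    (f : ℍ → ℂ) (hf : IsModFormChi k χ f) (v : Cos (Gamma0 N) → ℂ) :
    pairF (indForm (Gamma0 N) sec k (classicalHecke M k χ f)) v =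
      pairF (fun τ => (iotaHecke M k χ sec bar coc)ᴴ.mulVec
        (heckeT M k (indForm (Gamma0 N) sec k f) τ)) v ∧
    pairF (indForm (Gamma0 N) sec k (classicalHecke M k χ f)) v =
      pairF (heckeT M k (indForm (Gamma0 N) sec k f))
        ((iotaHecke M k χ sec bar coc).mulVec v) := by
  have hmv1 : ∀ τ c, (iotaHecke M k χ sec bar coc)ᴴ.mulVec
      (heckeT M k (indForm (Gamma0 N) sec k f) τ) c
      = ∑ p : Cos (Gamma0 N) × Delta M, conj (iotaHecke M k χ sec bar coc p c)
          * heckeT M k (indForm (Gamma0 N) sec k f) τ p := by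
    intro τ c
    simp [Matrix.mulVec, dotProduct, Matrix.conjTranspose_apply]
  have hmv2 : ∀ p : Cos (Gamma0 N) × Delta M, (iotaHecke M k χ sec bar coc).mulVec v p
      = ∑ c, iotaHecke M k χ sec bar coc p c * v c := by
    intro p
    simp [Matrix.mulVec, dotProduct]
  constructor
  · funext τ
    simp only [pairF]
    refine Finset.sum_congr rfl fun c _ => ?_
    rw [hmv1 τ c, main_key M hM k χ sec hsec bar coc hd f hf c τ]
  · funext τ
    simp only [pairF]
    calc ∑ c, indForm (Gamma0 N) sec k (classicalHecke M k χ f) τ c * conj (v c)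
        = ∑ c, (∑ p : Cos (Gamma0 N) × Delta M, conj (iotaHecke M k χ sec bar coc p c)
            * heckeT M k (indForm (Gamma0 N) sec k f) τ p) * conj (v c) :=
          Finset.sum_congr rfl fun c _ => by
            rw [main_key M hM k χ sec hsec bar coc hd f hf c τ]
      _ = ∑ p : Cos (Gamma0 N) × Delta M, ∑ c,
            conj (iotaHecke M k χ sec bar coc p c)
              * heckeT M k (indForm (Gamma0 N) sec k f) τ p * conj (v c) := by
          simp only [Finset.sum_mul]
          rw [Finset.sum_comm]
      _ = ∑ p : Cos (Gamma0 N) × Delta M,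
            heckeT M k (indForm (Gamma0 N) sec k f) τ p
              * conj ((iotaHecke M k χ sec bar coc).mulVec v p) := by
          refine Finset.sum_congr rfl fun p _ => ?_
          rw [hmv2 p, map_sum, Finset.mul_sum]
          refine Finset.sum_congr rfl fun c _ => ?_
          rw [_root_.map_mul]
          ring
end
end

section
/- Let χ be a Dirichlet character mod N, M a positive integer, and χ_M the Dirichlet character mod MN defined by χ. Let ι_old : ρ_{χ_M} → T_M ρ_χ be the inclusion 𝔢_γ ↦ M^{−k/2} \overline{χ}(I_{I₂}(I_{m_M}(γ))) 𝔢_{I_{m_M}(γ)} ⊗ 𝔢_{m_M·γ}, and π_old its adjoint projection. Then for every f ∈ M_k(χ) and every v ∈ V(ρ_{χ_M}): ⟨Ind(sc_M f), v⟩ = ⟨π_old(T_M Ind f), v⟩ = ⟨T_M Ind f, ι_old(v)⟩, where (sc_M f)(τ) = f(Mτ) is the oldform map and Ind(sc_M f) is formed with respect to Γ₀(MN) and χ_M. -/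
open scoped MatrixGroups Manifold Kronecker ComplexConjugate Classical ComplexOrder
open Matrix UpperHalfPlane Complex Filter MeasureTheory CongruenceSubgroup

noncomputable section

open VVMF

namespace OldAux

lemma denomZ_ne_zero (γ : SL(2, ℤ)) (τ : ℍ) : denomZ γ τ ≠ 0 := by
  rcases eq_or_ne (γ 1 0) 0 with h | h
  · have hdet : γ.1 0 0 * γ.1 1 1 - γ.1 0 1 * γ.1 1 0 = 1 := by
      have := γ.2; rwa [Matrix.det_fin_two] at this
    have h11 : (γ 1 1 : ℤ) ≠ 0 := by
      intro h0
      rw [show γ.1 1 0 = γ 1 0 from rfl, h] at hdet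
      simp only [show γ.1 1 1 = γ 1 1 from rfl, h0] at hdet
      omega
    simp [denomZ, h, h11]
  · intro hc
    have him := congrArg Complex.im hc
    simp [denomZ, Complex.add_im, Complex.mul_im] at him
    rcases him with h0 | h0
    · exact h (Int.cast_injective (by exact_mod_cast h0))
    · exact ne_of_gt τ.2 h0

lemma smul_coe (γ : SL(2, ℤ)) (τ : ℍ) :
    ((γ • τ : ℍ) : ℂ) = (((γ 0 0 : ℤ) : ℂ) * τ + ((γ 0 1 : ℤ) : ℂ)) / denomZ γ τ := by
  rw [UpperHalfPlane.specialLinearGroup_apply]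
  simp [denomZ]


lemma utAct_coe (m : GL2ℤ) (h0 : m 1 0 = 0) (ha : 0 < m 0 0) (hd : 0 < m 1 1) (τ : ℍ) :
    ((utAct m τ : ℍ) : ℂ) = (((m 0 0 : ℤ) : ℂ) * τ + ((m 0 1 : ℤ) : ℂ)) / ((m 1 1 : ℤ) : ℂ) := by
  have hrw : (((m 0 0 : ℤ) : ℂ) * τ + ((m 0 1 : ℤ) : ℂ)) / ((m 1 1 : ℤ) : ℂ)
      = Complex.ofReal ((m 0 0 : ℝ) / (m 1 1 : ℝ)) * τ + Complex.ofReal ((m 0 1 : ℝ) / (m 1 1 : ℝ)) := by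
    have hdne : ((m 1 1 : ℤ) : ℂ) ≠ 0 := by exact_mod_cast hd.ne'
    push_cast
    field_simp
  have hpos : 0 < ((((m 0 0 : ℤ) : ℂ) * τ + ((m 0 1 : ℤ) : ℂ)) / ((m 1 1 : ℤ) : ℂ)).im := by
    rw [hrw]
    have h1 : (0 : ℝ) < ((m 0 0 : ℤ) : ℝ) / ((m 1 1 : ℤ) : ℝ) :=
      div_pos (by exact_mod_cast ha) (by exact_mod_cast hd)
    have h2 := mul_pos h1 τ.2
    simp only [Complex.add_im, Complex.mul_im, Complex.ofReal_re, Complex.ofReal_im,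
      zero_mul, add_zero, zero_add, mul_zero]
    exact h2
  rw [utAct, dif_pos hpos]

lemma denomZ_cocycle (g β : SL(2, ℤ)) (w : ℍ) :
    denomZ (g * β) w = denomZ g (β • w) * denomZ β w := by
  have hD : denomZ β w ≠ 0 := OldAux.denomZ_ne_zero β w
  have hcoe := OldAux.smul_coe β w
  have e10 : ((g * β) 1 0 : ℤ) = g 1 0 * β 0 0 + g 1 1 * β 1 0 := by
    show ((g : GL2ℤ) * (β : GL2ℤ)) 1 0 = _
    simp [Matrix.mul_apply, Fin.sum_univ_two]
  have e11 : ((g * β) 1 1 : ℤ) = g 1 0 * β 0 1 + g 1 1 * β 1 1 := by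
    show ((g : GL2ℤ) * (β : GL2ℤ)) 1 1 = _
    simp [Matrix.mul_apply, Fin.sum_univ_two]
  rw [show denomZ (g * β) w = (((g * β) 1 0 : ℤ) : ℂ) * w + (((g * β) 1 1 : ℤ) : ℂ) from rfl,
    e10, e11, show denomZ g (β • w) = ((g 1 0 : ℤ) : ℂ) * ((β • w : ℍ) : ℂ) + ((g 1 1 : ℤ) : ℂ) from rfl,
    hcoe]
  rw [show denomZ β w = ((β 1 0 : ℤ) : ℂ) * w + ((β 1 1 : ℤ) : ℂ) from rfl] at hD ⊢
  push_cast
  field_simp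
  ring

lemma pairF_adjoint {α β : Type*} [Fintype α] [Fintype β] (A : Matrix α β ℂ)
    (x : ℍ → α → ℂ) (v : β → ℂ) :
    pairF (fun τ => Aᴴ.mulVec (x τ)) v = pairF x (A.mulVec v) := by
  funext τ
  simp only [pairF, Matrix.mulVec, Matrix.conjTranspose_apply, dotProduct,
    map_sum, _root_.map_mul, Finset.sum_mul, Finset.mul_sum]
  rw [Finset.sum_comm]
  refine Finset.sum_congr rfl fun a _ => Finset.sum_congr rfl fun b _ => ?_
  simp only [starRingEnd_apply]
  ring

lemma factor_eq (a d : ℤ) (M : ℕ) (ha : 0 < a) (hd : 0 < d) (hM : a * d = (M : ℤ)) (k : ℤ) :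
    ((((M : ℝ) ^ (-((k : ℝ) / 2)) : ℝ)) : ℂ) * (((((a : ℤ) : ℝ) / ((d : ℤ) : ℝ)) ^ ((k : ℝ) / 2) : ℝ) : ℂ)
      = ((d : ℤ) : ℂ) ^ (-k) := by
  have haR : (0 : ℝ) < (a : ℝ) := by exact_mod_cast ha
  have hdR : (0 : ℝ) < (d : ℝ) := by exact_mod_cast hd
  have hMR : ((M : ℕ) : ℝ) = (a : ℝ) * (d : ℝ) := by exact_mod_cast hM.symm
  have key : ((M : ℕ) : ℝ) ^ (-((k : ℝ) / 2)) * ((a : ℝ) / (d : ℝ)) ^ ((k : ℝ) / 2)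
      = (d : ℝ) ^ ((-k : ℤ) : ℝ) := by
    rw [hMR, Real.rpow_neg (by positivity), inv_mul_eq_div,
      ← Real.div_rpow (by positivity) (by positivity)]
    rw [show (a : ℝ) / (d : ℝ) / ((a : ℝ) * (d : ℝ)) = ((d : ℝ) ^ ((2 : ℕ) : ℝ))⁻¹ by
      rw [Real.rpow_natCast]; field_simp]
    rw [← Real.rpow_neg_one ((d : ℝ) ^ ((2 : ℕ) : ℝ))]
    rw [← Real.rpow_mul hdR.le, ← Real.rpow_mul hdR.le]
    congr 1
    push_cast
    ring
  rw [← Complex.ofReal_mul, key, Real.rpow_intCast]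
  push_cast
  ring

lemma inv_one_one (g : SL(2, ℤ)) : (g⁻¹ 1 1 : ℤ) = g 0 0 := by
  rw [Matrix.SpecialLinearGroup.SL2_inv_expl]
  simp

lemma chi_unit {N : ℕ} (χ : DirichletCharacter ℂ N) {g : SL(2, ℤ)} (hg : g ∈ Gamma0 N) :
    χ ((g 0 0 : ℤ) : ZMod N) * χ ((g 1 1 : ℤ) : ZMod N) = 1 := by
  rw [← _root_.map_mul]
  have hdet : g.1 0 0 * g.1 1 1 - g.1 0 1 * g.1 1 0 = 1 := by
    have := g.2; rwa [Matrix.det_fin_two] at this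
  have hc : ((g 1 0 : ℤ) : ZMod N) = 0 := Gamma0_mem.mp hg
  have hmul : ((g 0 0 : ℤ) : ZMod N) * ((g 1 1 : ℤ) : ZMod N) = 1 := by
    have h1 : ((g 0 0 * g 1 1 : ℤ) : ZMod N) = ((1 + g 0 1 * g 1 0 : ℤ) : ZMod N) := by
      congr 1
      show g.1 0 0 * g.1 1 1 = 1 + g.1 0 1 * g.1 1 0
      omega
    push_cast at h1
    rw [hc, mul_zero, add_zero] at h1
    exact h1
  rw [hmul, _root_.map_one]

lemma f_transf {N : ℕ} {k : ℤ} {χ : DirichletCharacter ℂ N} {f : ℍ → ℂ}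
    (hf : IsModFormChi k χ f) {g : SL(2, ℤ)} (hg : g ∈ Gamma0 N) (x : ℍ) :
    f (g • x) = denomZ g x ^ k * χ ((g 1 1 : ℤ) : ZMod N) * f x := by
  have h1 := congrFun (hf.2.1 g hg) x
  simp only [cslash, dirSL] at h1
  rw [inv_one_one] at h1
  have hne : denomZ g x ≠ 0 := OldAux.denomZ_ne_zero g x
  have h3 : denomZ g x ^ k * denomZ g x ^ (-k) = 1 := by
    rw [← zpow_add₀ hne]; simp
  have hu := chi_unit χ hg
  calc f (g • x)
      = (χ ((g 0 0 : ℤ) : ZMod N) * χ ((g 1 1 : ℤ) : ZMod N))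
        * (denomZ g x ^ k * denomZ g x ^ (-k)) * f (g • x) := by
        rw [hu, h3, one_mul, one_mul]
    _ = denomZ g x ^ k * χ ((g 1 1 : ℤ) : ZMod N)
        * (χ ((g 0 0 : ℤ) : ZMod N) * (denomZ g x ^ (-k) * f (g • x))) := by ring
    _ = denomZ g x ^ k * χ ((g 1 1 : ℤ) : ZMod N) * f x := by rw [h1]

lemma cocVal_eq {N : ℕ} (χ : DirichletCharacter ℂ N) (sec : Cos (Gamma0 N) → SL(2, ℤ))
    (hsec : IsSection (Gamma0 N) sec) (I : SL(2, ℤ)) :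
    cocVal χ sec I = dirSL χ (I * (sec (mkCos (Gamma0 N) I))⁻¹) := by
  unfold cocVal indCoc
  rw [hsec.2, one_mul]
  have hcos : cosMul (Gamma0 N) (mkCos (Gamma0 N) 1) I = mkCos (Gamma0 N) I := by
    show mkCos (Gamma0 N) (1 * I) = mkCos (Gamma0 N) I
    rw [one_mul]
  rw [hcos]

lemma mem_of_sec {N : ℕ} (sec : Cos (Gamma0 N) → SL(2, ℤ))
    (hsec : IsSection (Gamma0 N) sec) (I : SL(2, ℤ)) :
    I * (sec (mkCos (Gamma0 N) I))⁻¹ ∈ Gamma0 N := by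
  have h := hsec.1 (mkCos (Gamma0 N) I)
  have h2 := Quotient.exact h
  exact QuotientGroup.rightRel_apply.mp h2

end OldAux

/-- The inclusion `ι_old` and its adjoint projection `π_old = ι_oldᴴ`
intertwine the oldform map `(sc_M f)(τ) = f(Mτ)` and the vector-valued Hecke operator
with the induction map (the induction of `sc_M f` being formed with respect to
`Γ₀(MN)` and the mod `MN` character `χ_M` defined by `χ`): for `f ∈ M_k(χ)` and
`v ∈ V(ρ_{χ_M})`,
`⟨Ind(sc_M f), v⟩ = ⟨π_old(T_M Ind f), v⟩ = ⟨T_M Ind f, ι_old v⟩`. -/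



theorem oldform_from_vector_valued {N : ℕ} [NeZero N] (M : ℕ) (hM : 0 < M) [NeZero M]
    (k : ℤ) (χ : DirichletCharacter ℂ N)
    (χM : DirichletCharacter ℂ (M * N))
    (hχM : χM = DirichletCharacter.changeLevel (dvd_mul_left N M) χ)
    (sec : Cos (Gamma0 N) → SL(2, ℤ)) (hsec : IsSection (Gamma0 N) sec)
    (secMN : Cos (Gamma0 (M * N)) → SL(2, ℤ)) (hsecMN : IsSection (Gamma0 (M * N)) secMN)
    (bar : Delta M → SL(2, ℤ) → Delta M) (coc : Delta M → SL(2, ℤ) → SL(2, ℤ))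
    (hd : HeckeData M bar coc)
    (f : ℍ → ℂ) (hf : IsModFormChi k χ f) (v : Cos (Gamma0 (M * N)) → ℂ) :
    pairF (indForm (Gamma0 (M * N)) secMN k (scMul M f)) v =
      pairF (fun τ => (iotaOld M hM k χ sec secMN bar coc)ᴴ.mulVec
        (heckeT M k (indForm (Gamma0 N) sec k f) τ)) v ∧
    pairF (indForm (Gamma0 (M * N)) secMN k (scMul M f)) v =
      pairF (heckeT M k (indForm (Gamma0 N) sec k f))
        ((iotaOld M hM k χ sec secMN bar coc).mulVec v) := by
  have main : indForm (Gamma0 (M * N)) secMN k (scMul M f)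
      = fun τ => (iotaOld M hM k χ sec secMN bar coc)ᴴ.mulVec
          (heckeT M k (indForm (Gamma0 N) sec k f) τ) := by
    funext τ c
    have hmat := hd (mMat M hM) (secMN c)
    set γc := secMN c with hγc
    set mb := bar (mMat M hM) γc with hmb
    set I := coc (mMat M hM) γc with hIdef
    set β := sec (mkCos (Gamma0 N) I) with hβ
    obtain ⟨hc0, hapos, hdet, hb0, hbd⟩ := mb.2
    have hMZ : (0 : ℤ) < (M : ℤ) := by exact_mod_cast hM
    have hdpos : 0 < mb.1 1 1 := by nlinarith
    -- entry equations from the Hecke data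
    have e00 : (I 0 0 : ℤ) * mb.1 0 0 = (M : ℤ) * γc 0 0 := by
      have e := congrFun (congrFun hmat 0) 0
      simpa [Matrix.mul_apply, Fin.sum_univ_two, mMat, hc0] using e
    have e01 : (I 0 0 : ℤ) * mb.1 0 1 + (I 0 1 : ℤ) * mb.1 1 1 = (M : ℤ) * γc 0 1 := by
      have e := congrFun (congrFun hmat 0) 1
      simpa [Matrix.mul_apply, Fin.sum_univ_two, mMat] using e
    have e10 : (I 1 0 : ℤ) * mb.1 0 0 = γc 1 0 := by
      have e := congrFun (congrFun hmat 1) 0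
      simpa [Matrix.mul_apply, Fin.sum_univ_two, mMat, hc0] using e
    have e11 : (I 1 0 : ℤ) * mb.1 0 1 + (I 1 1 : ℤ) * mb.1 1 1 = γc 1 1 := by
      have e := congrFun (congrFun hmat 1) 1
      simpa [Matrix.mul_apply, Fin.sum_univ_two, mMat] using e
    have hdC : ((mb.1 1 1 : ℤ) : ℂ) ≠ 0 := by exact_mod_cast hdpos.ne'
    set w := utAct mb.1 τ with hwdef
    have hw : ((w : ℍ) : ℂ)
        = (((mb.1 0 0 : ℤ) : ℂ) * τ + ((mb.1 0 1 : ℤ) : ℂ)) / ((mb.1 1 1 : ℤ) : ℂ) :=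
      OldAux.utAct_coe mb.1 hc0 hapos hdpos τ
    have hDne : denomZ γc τ ≠ 0 := OldAux.denomZ_ne_zero γc τ
    have hYne : denomZ β w ≠ 0 := OldAux.denomZ_ne_zero β w
    have hden : denomZ I w = denomZ γc τ / ((mb.1 1 1 : ℤ) : ℂ) := by
      rw [show denomZ I w = ((I 1 0 : ℤ) : ℂ) * ((w : ℍ) : ℂ) + ((I 1 1 : ℤ) : ℂ) from rfl, hw,
        show denomZ γc τ = ((γc 1 0 : ℤ) : ℂ) * (τ : ℂ) + ((γc 1 1 : ℤ) : ℂ) from rfl]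
      have c10 : ((I 1 0 : ℤ) : ℂ) * ((mb.1 0 0 : ℤ) : ℂ) = ((γc 1 0 : ℤ) : ℂ) := by
        exact_mod_cast congrArg (Int.cast : ℤ → ℂ) e10
      have c11 : ((I 1 0 : ℤ) : ℂ) * ((mb.1 0 1 : ℤ) : ℂ)
          + ((I 1 1 : ℤ) : ℂ) * ((mb.1 1 1 : ℤ) : ℂ) = ((γc 1 1 : ℤ) : ℂ) := by
        exact_mod_cast congrArg (Int.cast : ℤ → ℂ) e11
      field_simp
      linear_combination (τ : ℂ) * c10 + c11
    have hINe : denomZ I w ≠ 0 := OldAux.denomZ_ne_zero I w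
    have hpoint : I • w = utAct !![(M : ℤ), 0; 0, 1] (γc • τ) := by
      apply UpperHalfPlane.ext
      rw [OldAux.smul_coe I w, hden, hw,
        OldAux.utAct_coe !![(M : ℤ), 0; 0, 1] (by simp) (by simpa using hMZ) (by norm_num)
          (γc • τ), OldAux.smul_coe γc τ]
      rw [show (!![(M : ℤ), 0; 0, 1] : GL2ℤ) 0 0 = (M : ℤ) from rfl,
        show (!![(M : ℤ), 0; 0, 1] : GL2ℤ) 0 1 = 0 from rfl,
        show (!![(M : ℤ), 0; 0, 1] : GL2ℤ) 1 1 = 1 from rfl]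
      have c00 : ((I 0 0 : ℤ) : ℂ) * ((mb.1 0 0 : ℤ) : ℂ) = (M : ℂ) * ((γc 0 0 : ℤ) : ℂ) := by
        exact_mod_cast congrArg (Int.cast : ℤ → ℂ) e00
      have c01 : ((I 0 0 : ℤ) : ℂ) * ((mb.1 0 1 : ℤ) : ℂ)
          + ((I 0 1 : ℤ) : ℂ) * ((mb.1 1 1 : ℤ) : ℂ) = (M : ℂ) * ((γc 0 1 : ℤ) : ℂ) := by
        exact_mod_cast congrArg (Int.cast : ℤ → ℂ) e01
      push_cast
      field_simp
      ring_nf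
      linear_combination (τ : ℂ) * c00 + c01
    -- the cocycle factorization I = g β
    have hgmem : I * β⁻¹ ∈ Gamma0 N := OldAux.mem_of_sec sec hsec I
    have hIgβ : I = (I * β⁻¹) * β := by group
    have hcoc : denomZ I w = denomZ (I * β⁻¹) (β • w) * denomZ β w := by
      nth_rewrite 1 [hIgβ]
      exact OldAux.denomZ_cocycle (I * β⁻¹) β w
    have hGne : denomZ (I * β⁻¹) (β • w) ≠ 0 := OldAux.denomZ_ne_zero _ _
    -- collapse the sum on the right-hand side
    have hsum : (iotaOld M hM k χ sec secMN bar coc)ᴴ.mulVec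
          (heckeT M k (indForm (Gamma0 N) sec k f) τ) c
        = conj ((iotaOld M hM k χ sec secMN bar coc) (mkCos (Gamma0 N) I, mb) c)
            * heckeT M k (indForm (Gamma0 N) sec k f) τ (mkCos (Gamma0 N) I, mb) := by
      rw [Matrix.mulVec, dotProduct]
      rw [Finset.sum_eq_single (mkCos (Gamma0 N) I, mb)]
      · rw [Matrix.conjTranspose_apply]; rfl
      · intro p _ hp
        have hz : (iotaOld M hM k χ sec secMN bar coc) p c = 0 := by
          rw [iotaOld, Matrix.of_apply, if_neg]
          intro hcond
          exact hp (Prod.ext hcond.2 hcond.1)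
        rw [Matrix.conjTranspose_apply, hz]
        simp
      · intro habs
        exact absurd (Finset.mem_univ _) habs
    have hιval : (iotaOld M hM k χ sec secMN bar coc) (mkCos (Gamma0 N) I, mb) c
        = ((((M : ℝ) ^ (-((k : ℝ) / 2)) : ℝ)) : ℂ) * conj (cocVal χ sec I) := by
      rw [iotaOld, Matrix.of_apply, if_pos ⟨rfl, rfl⟩]
    have hcocval : cocVal χ sec I = χ (((I * β⁻¹) 1 1 : ℤ) : ZMod N) := by
      rw [OldAux.cocVal_eq χ sec hsec I]; rfl
    -- put everything together
    show denomZ γc τ ^ (-k) * f (utAct !![(M : ℤ), 0; 0, 1] (γc • τ)) = _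
    rw [hsum, hιval, hcocval]
    rw [show heckeT M k (indForm (Gamma0 N) sec k f) τ (mkCos (Gamma0 N) I, mb)
        = (((((mb.1 0 0 : ℤ) : ℝ) / ((mb.1 1 1 : ℤ) : ℝ)) ^ ((k : ℝ) / 2) : ℝ) : ℂ)
          * (denomZ β w ^ (-k) * f (β • w)) from rfl]
    rw [← hpoint, hIgβ, mul_smul, OldAux.f_transf hf hgmem (β • w)]
    rw [_root_.map_mul (starRingEnd ℂ), Complex.conj_ofReal, Complex.conj_conj]
    rw [show I * β⁻¹ * β * β⁻¹ = I * β⁻¹ from by group]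
    have hGY : denomZ (I * β⁻¹) (β • w) * denomZ β w = denomZ γc τ / ((mb.1 1 1 : ℤ) : ℂ) := by
      rw [← hcoc, hden]
    have hG : denomZ (I * β⁻¹) (β • w) = denomZ γc τ / ((mb.1 1 1 : ℤ) : ℂ) / denomZ β w :=
      (eq_div_iff hYne).mpr hGY
    have hDk : denomZ γc τ ^ k ≠ 0 := zpow_ne_zero k hDne
    have hYk : denomZ β w ^ k ≠ 0 := zpow_ne_zero k hYne
    have hdk : ((mb.1 1 1 : ℤ) : ℂ) ^ k ≠ 0 := zpow_ne_zero k hdC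
    have halg : denomZ γc τ ^ (-k) * denomZ (I * β⁻¹) (β • w) ^ k
        = ((mb.1 1 1 : ℤ) : ℂ) ^ (-k) * denomZ β w ^ (-k) := by
      rw [hG, div_zpow, div_zpow, _root_.zpow_neg, _root_.zpow_neg, _root_.zpow_neg]
      field_simp
    have hfac := OldAux.factor_eq (mb.1 0 0) (mb.1 1 1) M hapos hdpos hdet k
    calc denomZ γc τ ^ (-k) * (denomZ (I * β⁻¹) (β • w) ^ k
          * χ (((I * β⁻¹) 1 1 : ℤ) : ZMod N) * f (β • w))
        = (denomZ γc τ ^ (-k) * denomZ (I * β⁻¹) (β • w) ^ k)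
          * (χ (((I * β⁻¹) 1 1 : ℤ) : ZMod N) * f (β • w)) := by ring
      _ = (((mb.1 1 1 : ℤ) : ℂ) ^ (-k) * denomZ β w ^ (-k))
          * (χ (((I * β⁻¹) 1 1 : ℤ) : ZMod N) * f (β • w)) := by rw [halg]
      _ = _ := by rw [← hfac]; ring
  refine ⟨?_, ?_⟩
  · rw [main]
  · rw [main, OldAux.pairF_adjoint]
end
end
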